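/- arXiv:math/0605567 — 10 statements merged into one kernel-verified Lean document; each statement's English description precedes it below -/
import Mathlib

section
/- Let L be a p×n integer matrix of rank p with n = r + s, and suppose the last s columns of L are linearly independent over ℚ. Then there exist a permutation matrix Δ ∈ GL_n(ℤ) permuting only the first r coordinates, a p×p integer matrix Γ with nonzero determinant, and a positive integer d, such that Γ·L·Δ = [L_1 | d·I_p], i.e., the submatrix of Γ·L·Δ formed by the last p columns equals d times the p×p identity matrix. Moreover, the map λ ↦ Δ^{−1}λ is a bijection from Σ_L = {λ ∈ ℕ^r × ℤ^s : Lλ = 0} onto Σ_{ΓLΔ} = {λ ∈ ℕ^r × ℤ^s : (ΓLΔ)λ = 0}. -/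
open Matrix

/-- Let `L` be a `p × n` integer matrix of rank `p`, `n = r + s`, whose last
`s` columns are linearly independent over `ℚ`. Then there exist a permutation `σ` of the
columns fixing the last `s` of them (a permutation matrix `Δ` permuting only the first `r`
coordinates), a `p × p` integer matrix `Γ` with nonzero determinant, and a positive
integer `d`, such that the last `p` columns of `Γ·L·Δ` equal `d·I_p`.  Moreover
`λ ↦ Δ⁻¹λ` (i.e. `λ ↦ λ ∘ σ`) is a bijection from `Σ_L = {λ ∈ ℕ^r × ℤ^s | Lλ = 0}` onto
`Σ_{ΓLΔ}`. -/
theorem stmt4 {p r s : ℕ} (n : ℕ) (hn : n = r + s)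
    (L : Matrix (Fin p) (Fin n) ℤ)
    (hrank : LinearIndependent ℚ (fun j : Fin p => fun i : Fin n => (L j i : ℚ)))
    (hcols : LinearIndependent ℚ
      (fun i : Fin s => fun j : Fin p =>
        (L j ⟨r + (i : ℕ), by have := i.isLt; omega⟩ : ℚ))) :
    ∃ (σ : Equiv.Perm (Fin n)) (Γ : Matrix (Fin p) (Fin p) ℤ) (d : ℤ),
      (∀ i : Fin n, r ≤ (i : ℕ) → σ i = i) ∧
      Γ.det ≠ 0 ∧ 0 < d ∧
      (∀ (j : Fin p) (i : Fin n), n - p ≤ (i : ℕ) →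
        (Γ * L.submatrix id σ) j i = if (i : ℕ) = (n - p) + (j : ℕ) then d else 0) ∧
      Set.BijOn (fun lam : Fin n → ℤ => lam ∘ σ)
        {lam : Fin n → ℤ | (∀ i : Fin n, (i : ℕ) < r → 0 ≤ lam i) ∧ L.mulVec lam = 0}
        {lam : Fin n → ℤ | (∀ i : Fin n, (i : ℕ) < r → 0 ≤ lam i) ∧
          (Γ * L.submatrix id σ).mulVec lam = 0} := by
  classical
  subst hn
  set col : Fin (r+s) → (Fin p → ℚ) := (L.map ((Int.cast : ℤ → ℚ)))ᵀ with hcol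
  have hp_le : p ≤ r + s := by
    have h := hrank.fintype_card_le_finrank
    simpa [Module.finrank_fin_fun] using h
  have hs_le : s ≤ p := by
    have h := hcols.fintype_card_le_finrank
    simpa [Module.finrank_fin_fun] using h
  have hrk : (L.map (Int.cast : ℤ → ℚ)).rank = p := by
    have h : LinearIndependent ℚ (fun i => (L.map (Int.cast : ℤ → ℚ)) i) := hrank
    have h2 := h.rank_matrix
    rw [Fintype.card_fin] at h2
    exact h2
  have hspan : Submodule.span ℚ (Set.range col) = ⊤ := by
    apply Submodule.eq_top_of_finrank_eq
    have h := Matrix.rank_eq_finrank_span_cols (L.map (Int.cast : ℤ → ℚ))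
    rw [hrk] at h
    rw [Module.finrank_fin_fun]
    exact h.symm
  have key : ∀ k, k ≤ p - s → ∃ idx : Fin (s+k) → Fin (r+s),
      (∀ a : Fin (s+k), (a:ℕ) < s → ((idx a):ℕ) = r + a) ∧ (∀ a : Fin (s+k), s ≤ (a:ℕ) → ((idx a):ℕ) < r) ∧
      LinearIndependent ℚ (col ∘ idx) := by
    intro k
    induction k with
    | zero =>
      intro _
      refine ⟨fun a => ⟨r + a, by have := a.isLt; omega⟩, fun a ha => rfl,
        fun a ha => absurd a.isLt (by omega), hcols⟩
    | succ k ih =>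
      intro hk
      obtain ⟨idx, h1, h2, h3⟩ := ih (by omega)
      have hfr : Module.finrank ℚ (Submodule.span ℚ (Set.range (col ∘ idx))) = s + k := by
        rw [finrank_span_eq_card h3, Fintype.card_fin]
      have hne : Submodule.span ℚ (Set.range (col ∘ idx)) ≠ ⊤ := by
        intro h
        rw [h, finrank_top, Module.finrank_fin_fun] at hfr
        omega
      obtain ⟨j, hj⟩ : ∃ j : Fin (r+s), col j ∉ Submodule.span ℚ (Set.range (col ∘ idx)) := by
        by_contra h
        push_neg at h
        exact hne (le_antisymm le_top (hspan ▸ Submodule.span_le.2 (Set.range_subset_iff.2 h)))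
      have hjr : (j:ℕ) < r := by
        by_contra h
        push_neg at h
        apply hj
        have hj2 : idx ⟨(j:ℕ) - r, by have := j.isLt; omega⟩ = j := by
          apply Fin.ext
          rw [h1 _ (by simp; have := j.isLt; omega)]
          simp
          omega
        rw [← hj2]
        exact Submodule.subset_span ⟨_, rfl⟩
      have snoc_lt : ∀ {m : ℕ} (f : Fin m → Fin (r+s)) (x : Fin (r+s)) (a : Fin (m+1))
          (h : (a:ℕ) < m), Fin.snoc (α := fun _ => Fin (r+s)) f x a = f ⟨a, h⟩ := by
        intro m f x a h
        simp [Fin.snoc, h]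
        rfl
      have snoc_ge : ∀ {m : ℕ} (f : Fin m → Fin (r+s)) (x : Fin (r+s)) (a : Fin (m+1))
          (h : ¬ (a:ℕ) < m), Fin.snoc (α := fun _ => Fin (r+s)) f x a = x := by
        intro m f x a h
        simp [Fin.snoc, h]
      refine ⟨Fin.snoc idx j, ?_, ?_, ?_⟩
      · intro a ha
        have hlt : (a:ℕ) < s + k := by omega
        rw [snoc_lt idx j a hlt]
        exact h1 _ ha
      · intro a ha
        by_cases hlt : (a:ℕ) < s + k
        · rw [snoc_lt idx j a hlt]
          exact h2 _ ha
        · rw [snoc_ge idx j a hlt]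
          exact hjr
      · rw [Fin.comp_snoc]
        exact linearIndependent_fin_snoc.2 ⟨h3, hj⟩
  have hps : s + (p - s) = p := by omega
  obtain ⟨idx0, hB1, hB2, hB3⟩ := key (p - s) le_rfl
  set idx : Fin p → Fin (r+s) := fun a => idx0 (Fin.cast hps.symm a) with hidx
  have hA1 : ∀ a : Fin p, (a:ℕ) < s → ((idx a):ℕ) = r + a := fun a ha => hB1 _ ha
  have hA2 : ∀ a : Fin p, s ≤ (a:ℕ) → ((idx a):ℕ) < r := fun a ha => hB2 _ ha
  have hli : LinearIndependent ℚ (col ∘ idx) :=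
    hB3.comp (Fin.cast hps.symm) (Fin.cast_injective _)
  have hidxinj : Function.Injective idx := fun a b h => hli.injective (congrArg col h)
  -- the permutation
  have hsub_card : True := trivial
  have hf1 : ∀ x : {x : Fin (r+s) // (x:ℕ) < r}, (r+s) - p ≤ (x.1:ℕ) →
      s + ((x.1:ℕ) - ((r+s)-p)) < p := by
    intro x hx
    have := x.2
    omega
  let f : {x : {x : Fin (r+s) // (x:ℕ) < r} // (r+s) - p ≤ (x.1:ℕ)} →
      {x : {x : Fin (r+s) // (x:ℕ) < r} // ∃ a : Fin p, s ≤ (a:ℕ) ∧ idx a = x.1} :=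
    fun x => ⟨⟨idx ⟨s + ((x.1.1:ℕ) - ((r+s)-p)), hf1 x.1 x.2⟩, hA2 _ (Nat.le_add_right _ _)⟩,
      ⟨⟨s + ((x.1.1:ℕ) - ((r+s)-p)), hf1 x.1 x.2⟩, Nat.le_add_right _ _, rfl⟩⟩
  have hfbij : Function.Bijective f := by
    constructor
    · intro x y hxy
      have h0 : idx ⟨s + ((x.1.1:ℕ) - ((r+s)-p)), hf1 x.1 x.2⟩
          = idx ⟨s + ((y.1.1:ℕ) - ((r+s)-p)), hf1 y.1 y.2⟩ := congrArg (fun z => z.1.1) hxy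
      have h1 := congrArg Fin.val (hidxinj h0)
      simp only at h1
      have hx := x.2; have hy := y.2
      apply Subtype.ext; apply Subtype.ext; apply Fin.ext
      omega
    · intro y
      obtain ⟨a, ha, haeq⟩ := y.2
      have hyv := y.1.2
      have halt := a.isLt
      refine ⟨⟨⟨⟨(r+s) - p + ((a:ℕ) - s), by omega⟩,
        (show (r+s) - p + ((a:ℕ) - s) < r by omega)⟩, Nat.le_add_right _ _⟩, ?_⟩
      apply Subtype.ext; apply Subtype.ext
      show idx ⟨s + (((r+s) - p + ((a:ℕ) - s)) - ((r+s)-p)), _⟩ = y.1.1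
      exact (congrArg idx (Fin.ext
        (show s + (((r+s) - p + ((a:ℕ) - s)) - ((r+s)-p)) = (a:ℕ) by omega))).trans haeq
  let eAB := Equiv.ofBijective f hfbij
  let τ : Equiv.Perm {x : Fin (r+s) // (x:ℕ) < r} := Equiv.extendSubtype eAB
  let σ : Equiv.Perm (Fin (r+s)) :=
    τ.extendDomain (Equiv.refl {x : Fin (r+s) // (x:ℕ) < r})
  have hfix : ∀ i : Fin (r+s), r ≤ (i:ℕ) → σ i = i := fun i h =>
    Equiv.Perm.extendDomain_apply_not_subtype τ (Equiv.refl _) (by omega)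
  have happ : ∀ (i : Fin (r+s)) (h : (i:ℕ) < r), σ i = (τ ⟨i, h⟩).1 := by
    intro i h
    rw [Equiv.Perm.extendDomain_apply_subtype τ (Equiv.refl _) h]
    rfl
  have hσlt : ∀ (i : Fin (r+s)), (i:ℕ) < r → ((σ i):ℕ) < r := fun i h => by
    rw [happ i h]; exact (τ ⟨i, h⟩).2
  have hmemB : ∀ (i : Fin (r+s)) (h : (i:ℕ) < r), (r+s) - p ≤ (i:ℕ) →
      ∃ a : Fin p, s ≤ (a:ℕ) ∧ idx a = σ i := by
    intro i h hge
    have hm := Equiv.extendSubtype_mem eAB ⟨i, h⟩ hge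
    rw [happ i h]
    exact hm
  -- the map e giving the last p columns after permutation
  have hbound : ∀ j : Fin p, (r+s) - p + (j:ℕ) < r + s := fun j => by have := j.isLt; omega
  let e : Fin p → Fin (r+s) := fun j => σ ⟨(r+s) - p + (j:ℕ), hbound j⟩
  have heinj : Function.Injective e := by
    intro a b h
    have h2 := congrArg Fin.val (σ.injective h)
    simp only at h2
    exact Fin.ext (by omega)
  have hrange : ∀ j : Fin p, ∃ a : Fin p, idx a = e j := by
    intro j
    have hjlt := j.isLt
    by_cases hc : (r+s) - p + (j:ℕ) < r
    · obtain ⟨a, _, haeq⟩ := hmemB ⟨(r+s)-p+(j:ℕ), hbound j⟩ hc (Nat.le_add_right _ _)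
      exact ⟨a, haeq⟩
    · push_neg at hc
      refine ⟨⟨(r+s)-p+(j:ℕ) - r, by omega⟩, ?_⟩
      have hfix' := hfix ⟨(r+s)-p+(j:ℕ), hbound j⟩ hc
      show idx _ = σ _
      rw [hfix']
      apply Fin.ext
      rw [hA1 _ (show (r+s)-p+(j:ℕ) - r < s by omega)]
      show r + ((r+s)-p+(j:ℕ) - r) = (r+s)-p+(j:ℕ)
      omega
  choose π hπ using hrange
  have hπinj : Function.Injective π := by
    intro a b h
    apply heinj
    rw [← hπ a, ← hπ b, h]
  have hFli : LinearIndependent ℚ (col ∘ e) := by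
    have h0 : col ∘ e = (col ∘ idx) ∘ π := by
      funext j
      simp only [Function.comp_apply]
      rw [hπ j]
    rw [h0]
    exact hli.comp π hπinj
  -- the matrix M of the last p columns
  let M : Matrix (Fin p) (Fin p) ℤ := Matrix.of fun i j => L i (e j)
  have hMdetq : ((M.det : ℤ) : ℚ) ≠ 0 := by
    have hcolsM : LinearIndependent ℚ (fun j => (M.map (Int.cast : ℤ → ℚ))ᵀ j) := hFli
    have hunit := Matrix.linearIndependent_cols_iff_isUnit.mp hcolsM
    have hdet := (Matrix.isUnit_iff_isUnit_det _).mp hunit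
    have h1 : ((M.det : ℤ) : ℚ) = (M.map (Int.cast : ℤ → ℚ)).det :=
      RingHom.map_det (Int.castRingHom ℚ) M
    rw [h1]
    exact hdet.ne_zero
  have hMdet : M.det ≠ 0 := fun h => hMdetq (by rw [h]; simp)
  set ε : ℤ := if 0 ≤ M.det then 1 else -1 with hεdef
  have hεne : ε ≠ 0 := by
    rw [hεdef]; split <;> simp
  have hd : 0 < ε * M.det := by
    rcases lt_or_gt_of_ne hMdet with h | h
    · rw [hεdef, if_neg (by omega)]
      omega
    · rw [hεdef, if_pos (by omega)]
      omega
  let Γ : Matrix (Fin p) (Fin p) ℤ := ε • M.adjugate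
  have hΓdet : Γ.det ≠ 0 := by
    show (ε • M.adjugate).det ≠ 0
    rw [Matrix.det_smul, Matrix.det_adjugate]
    exact mul_ne_zero (pow_ne_zero _ hεne) (pow_ne_zero _ hMdet)
  have hΓM : Γ * M = (ε * M.det) • (1 : Matrix (Fin p) (Fin p) ℤ) := by
    show (ε • M.adjugate) * M = _
    rw [Matrix.smul_mul, Matrix.adjugate_mul, smul_smul]
  -- mulVec compatibility
  have hmv : ∀ v : Fin (r+s) → ℤ, (L.submatrix id σ).mulVec (v ∘ σ) = L.mulVec v := by
    intro v
    funext j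
    simp only [Matrix.mulVec, dotProduct, Matrix.submatrix_apply, Function.comp_apply,
      id_eq]
    exact Equiv.sum_comp σ (fun k => L j k * v k)
  have hσsymm_lt : ∀ i : Fin (r+s), (i:ℕ) < r → ((σ.symm i):ℕ) < r := by
    intro i h
    by_contra hc
    push_neg at hc
    have h2 := hfix _ hc
    rw [Equiv.apply_symm_apply] at h2
    rw [← h2] at hc
    omega
  refine ⟨σ, Γ, ε * M.det, hfix, hΓdet, hd, ?_, ?_, ?_, ?_⟩
  · -- the last p columns of Γ·L·Δ are d·I
    intro j i hi
    have hilt := i.isLt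
    have hj' : (i:ℕ) - ((r+s)-p) < p := by omega
    have hsub : ∀ k : Fin p, (L.submatrix id σ) k i = M k ⟨(i:ℕ) - ((r+s)-p), hj'⟩ := by
      intro k
      show L (id k) (σ i) = L k (e ⟨(i:ℕ) - ((r+s)-p), hj'⟩)
      have h0 : i = (⟨(r+s)-p + ((i:ℕ) - ((r+s)-p)), hbound ⟨_, hj'⟩⟩ : Fin (r+s)) :=
        Fin.ext (show (i:ℕ) = (r+s)-p + ((i:ℕ) - ((r+s)-p)) by omega)
      exact congrArg (L k) (congrArg σ h0)
    rw [show (Γ * L.submatrix id σ) j i = (Γ * M) j ⟨(i:ℕ)-((r+s)-p), hj'⟩ from by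
      rw [Matrix.mul_apply, Matrix.mul_apply]
      exact Finset.sum_congr rfl fun k _ => by rw [hsub k]]
    rw [hΓM, Matrix.smul_apply, Matrix.one_apply]
    by_cases hc : (i:ℕ) = (r+s) - p + (j:ℕ)
    · rw [if_pos hc,
        if_pos (Fin.ext (show (j:ℕ) = (i:ℕ)-((r+s)-p) by omega) : j = ⟨_, hj'⟩)]
      simp
    · rw [if_neg hc, if_neg (fun h : j = ⟨_, hj'⟩ => hc (by
        have := congrArg Fin.val h
        simp only at this
        omega))]
      simp
  · -- MapsTo
    rintro lam ⟨hpos, h0⟩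
    refine ⟨fun i hi => hpos _ (hσlt i hi), ?_⟩
    show (Γ * L.submatrix id σ).mulVec (lam ∘ σ) = 0
    rw [← Matrix.mulVec_mulVec, hmv, h0, Matrix.mulVec_zero]
  · -- InjOn
    intro a _ b _ h
    funext k
    have h2 := congrFun h (σ.symm k)
    simpa using h2
  · -- SurjOn
    rintro mu ⟨hpos, h0⟩
    have hcomp : (mu ∘ σ.symm) ∘ σ = mu := by
      funext k
      simp
    refine ⟨mu ∘ σ.symm, ⟨fun i hi => hpos _ (hσsymm_lt i hi), ?_⟩, hcomp⟩
    have h1 : Γ.mulVec ((L.submatrix id σ).mulVec mu) = 0 := by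
      rw [Matrix.mulVec_mulVec]; exact h0
    have h2 : (L.submatrix id σ).mulVec mu = 0 := Matrix.eq_zero_of_mulVec_eq_zero hΓdet h1
    show L.mulVec (mu ∘ σ.symm) = 0
    rw [← hmv (mu ∘ σ.symm), hcomp]
    exact h2
end

section
/- The following statements are equivalent: (1) 𝔎 ∩ (ℕ^r × ℤ^s) = {0} (equivalently, the only homogeneous Laurent polynomials of degree 0 are the constants, S_0 = k); (2) 𝔎 ∩ (ℕ^r × ℤ^s) is a finite set (equivalently, S_0 is a finite-dimensional k-vector space); (3) the real linear span of 𝔎 in ℝ^n intersects the cone ℝ_{≥0}^r × ℝ^s = {x ∈ ℝ^n : x_i ≥ 0 for 1 ≤ i ≤ r} only in 0 (equivalently, any fan compatible with the multigrading is not contained in a half-space). -/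
open Matrix

/-- The kernel `𝔎` of the degree map `deg : ℤ^n → A = ℤ^p ⊕ ℤ/d_1 ⊕ … ⊕ ℤ/d_t`. -/
def Kker {p t n : ℕ} (L : Matrix (Fin p ⊕ Fin t) (Fin n) ℤ) (d : Fin t → ℤ) :
    Set (Fin n → ℤ) :=
  {lam | (∀ j : Fin p, L.mulVec lam (Sum.inl j) = 0) ∧
    ∀ j : Fin t, d j ∣ L.mulVec lam (Sum.inr j)}

/-- `ℕ^r × ℤ^s ⊆ ℤ^n`: the vectors whose first `r` coordinates are nonnegative. -/
def NNcone (r n : ℕ) : Set (Fin n → ℤ) :=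
  {lam | ∀ i : Fin n, (i : ℕ) < r → 0 ≤ lam i}

open Finset

/-- Key lemma: real solutions of a rational homogeneous linear system lie in the real
span of the rational solutions. -/
lemma kerDense : ∀ (z : ℕ) (ι : Type) [Fintype ι] [DecidableEq ι]
    (A : Fin z → ι → ℚ) (c : ι → ℝ),
    (∀ row, ∑ k, (A row k : ℝ) * c k = 0) →
    c ∈ Submodule.span ℝ ((fun q : ι → ℚ => fun k => ((q k : ℚ) : ℝ)) ''
      {q : ι → ℚ | ∀ row, ∑ k, A row k * q k = 0}) := by
  intro z
  induction z with
  | zero =>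
    intro ι _ _ A c _
    have hc : c = ∑ k, c k • (fun j => ((if k = j then (1:ℚ) else 0 : ℚ) : ℝ)) := by
      funext j
      rw [Finset.sum_apply]
      simp only [Pi.smul_apply, smul_eq_mul, apply_ite (fun q : ℚ => (q : ℝ)), Rat.cast_one,
        Rat.cast_zero, mul_ite, mul_one, mul_zero]
      simp
    rw [hc]
    refine Submodule.sum_mem _ fun k _ => Submodule.smul_mem _ _ ?_
    exact Submodule.subset_span ⟨fun j => if k = j then 1 else 0, fun row => row.elim0, rfl⟩
  | succ z ih =>
    intro ι _ _ A c hc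
    by_cases hf : ∀ k, A 0 k = 0
    · have := ih ι (fun row => A row.succ) c (fun row => hc row.succ)
      refine Submodule.span_mono ?_ this
      rintro - ⟨q, hq, rfl⟩
      refine ⟨q, fun row => ?_, rfl⟩
      refine Fin.cases ?_ (fun row => hq row) row
      simp [hf]
    · push_neg at hf
      obtain ⟨j, hj⟩ := hf
      set f : ι → ℚ := A 0 with hfdef
      have hfj : (f j : ℝ) ≠ 0 := by exact_mod_cast hj
      set M : ι → {k : ι // k ≠ j} → ℚ :=
        fun k k' => if k = j then -(f j)⁻¹ * f ↑k' else if k = ↑k' then 1 else 0 with hM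
      have heraseR : ∀ g : ι → ℝ, ∑ k' : {k : ι // k ≠ j}, g ↑k' = ∑ k ∈ univ.erase j, g k :=
        fun g => (Finset.sum_subtype _ (fun x => by simp) g).symm
      have heraseQ : ∀ g : ι → ℚ, ∑ k' : {k : ι // k ≠ j}, g ↑k' = ∑ k ∈ univ.erase j, g k :=
        fun g => (Finset.sum_subtype _ (fun x => by simp) g).symm
      -- the value of the substitution at a non-pivot coordinate, rational case
      have hphiQ_ne : ∀ (q : {k : ι // k ≠ j} → ℚ) (k : ι) (hk : k ≠ j),
          (∑ k', M k k' * q k') = q ⟨k, hk⟩ := by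
        intro q k hk
        have : ∀ k' : {k : ι // k ≠ j}, M k k' * q k' = if (⟨k, hk⟩ : {k : ι // k ≠ j}) = k' then q k' else 0 := by
          intro k'
          simp only [hM, if_neg hk]
          by_cases h : k = ↑k'
          · rw [if_pos h, if_pos (Subtype.ext h), one_mul]
          · rw [if_neg h, if_neg (fun hh => h (congrArg Subtype.val hh)), zero_mul]
        rw [Finset.sum_congr rfl fun k' _ => this k', Finset.sum_ite_eq, if_pos (mem_univ _)]
      have hphiR_ne : ∀ (u : {k : ι // k ≠ j} → ℝ) (k : ι) (hk : k ≠ j),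
          (∑ k', (M k k' : ℝ) * u k') = u ⟨k, hk⟩ := by
        intro u k hk
        have : ∀ k' : {k : ι // k ≠ j}, (M k k' : ℝ) * u k' = if (⟨k, hk⟩ : {k : ι // k ≠ j}) = k' then u k' else 0 := by
          intro k'
          simp only [hM, if_neg hk]
          by_cases h : k = ↑k'
          · rw [if_pos h, if_pos (Subtype.ext h)]; norm_num
          · rw [if_neg h, if_neg (fun hh => h (congrArg Subtype.val hh))]; norm_num
        rw [Finset.sum_congr rfl fun k' _ => this k', Finset.sum_ite_eq, if_pos (mem_univ _)]
      -- the value at the pivot coordinate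
      have hphiQ_j : ∀ (q : {k : ι // k ≠ j} → ℚ),
          (∑ k', M j k' * q k') = -(f j)⁻¹ * ∑ k' : {k : ι // k ≠ j}, f ↑k' * q k' := by
        intro q
        rw [Finset.mul_sum]
        refine Finset.sum_congr rfl fun k' _ => ?_
        simp only [hM, if_pos rfl]; ring
      have hphiR_j : ∀ (u : {k : ι // k ≠ j} → ℝ),
          (∑ k', (M j k' : ℝ) * u k') = -(f j : ℝ)⁻¹ * ∑ k' : {k : ι // k ≠ j}, (f ↑k' : ℝ) * u k' := by
        intro u
        rw [Finset.mul_sum]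
        refine Finset.sum_congr rfl fun k' _ => ?_
        simp only [hM, if_pos rfl]; push_cast; ring
      -- the substitution satisfies the pivot equation (rational case)
      have ha : ∀ q : {k : ι // k ≠ j} → ℚ, ∑ k, f k * (∑ k', M k k' * q k') = 0 := by
        intro q
        rw [← Finset.add_sum_erase _ _ (mem_univ j), hphiQ_j]
        have : ∑ k ∈ univ.erase j, f k * (∑ k', M k k' * q k')
            = ∑ k' : {k : ι // k ≠ j}, f ↑k' * q k' := by
          rw [← heraseQ (fun k => f k * (∑ k', M k k' * q k'))]
          refine Finset.sum_congr rfl fun k' _ => ?_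
          rw [hphiQ_ne q ↑k' k'.2]
        rw [this]
        set T := ∑ k' : {k : ι // k ≠ j}, f ↑k' * q k' with hT
        have : f j * (-(f j)⁻¹ * T) = -T := by field_simp
        rw [this]; ring
      -- the substituted value of the real solution is the real solution itself
      have hb : ∀ k, (∑ k' : {k : ι // k ≠ j}, (M k k' : ℝ) * c ↑k') = c k := by
        intro k
        by_cases hk : k = j
        · rw [hk, hphiR_j]
          have h2 : ∑ k' : {k : ι // k ≠ j}, (f ↑k' : ℝ) * c ↑k' = - ((f j : ℝ) * c j) := by
            rw [heraseR (fun i => (f i : ℝ) * c i)]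
            have h3 := hc 0
            rw [← Finset.add_sum_erase _ (fun i => ((A 0 i : ℚ) : ℝ) * c i) (mem_univ j)] at h3
            rw [← hfdef] at h3
            linarith
          rw [h2]
          field_simp
        · exact hphiR_ne _ k hk
      -- the reduced system
      set B : Fin z → {k : ι // k ≠ j} → ℚ := fun row k' => ∑ k, A row.succ k * M k k' with hB
      have hswapQ : ∀ (row : Fin z) (q : {k : ι // k ≠ j} → ℚ),
          ∑ k', B row k' * q k' = ∑ k, A row.succ k * (∑ k', M k k' * q k') := by
        intro row q
        simp only [hB, Finset.sum_mul, Finset.mul_sum]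
        rw [Finset.sum_comm]
        exact Finset.sum_congr rfl fun k _ => Finset.sum_congr rfl fun k' _ => mul_assoc _ _ _
      have hswapR : ∀ (row : Fin z) (u : {k : ι // k ≠ j} → ℝ),
          ∑ k', (B row k' : ℝ) * u k' = ∑ k, (A row.succ k : ℝ) * (∑ k', (M k k' : ℝ) * u k') := by
        intro row u
        have : ∀ k', (B row k' : ℝ) * u k' = ∑ k, (A row.succ k : ℝ) * ((M k k' : ℝ) * u k') := by
          intro k'
          rw [hB]
          push_cast
          rw [Finset.sum_mul]
          exact Finset.sum_congr rfl fun k _ => mul_assoc _ _ _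
        rw [Finset.sum_congr rfl fun k' _ => this k', Finset.sum_comm]
        exact Finset.sum_congr rfl fun k _ => (Finset.mul_sum _ _ _).symm
      have hrows : ∀ row : Fin z, ∑ k', (B row k' : ℝ) * (fun k' : {k : ι // k ≠ j} => c ↑k') k' = 0 := by
        intro row
        rw [hswapR]
        calc ∑ k, (A row.succ k : ℝ) * (∑ k', (M k k' : ℝ) * c ↑k')
            = ∑ k, (A row.succ k : ℝ) * c k := Finset.sum_congr rfl fun k _ => by rw [hb k]
          _ = 0 := hc row.succ
      have hmem := ih {k : ι // k ≠ j} B (fun k' => c ↑k') hrows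
      -- transport through the substitution linear map
      let Φ : ({k : ι // k ≠ j} → ℝ) →ₗ[ℝ] (ι → ℝ) :=
        { toFun := fun u k => ∑ k', (M k k' : ℝ) * u k'
          map_add' := by
            intro a b; funext k
            simp [mul_add, Finset.sum_add_distrib]
          map_smul' := by
            intro m a; funext k
            simp only [Pi.smul_apply, smul_eq_mul, RingHom.id_apply, Finset.mul_sum]
            exact Finset.sum_congr rfl fun k' _ => by ring }
      have hc_eq : c = Φ (fun k' => c ↑k') := by
        funext k; exact (hb k).symm
      rw [hc_eq]
      have himg := Submodule.mem_map_of_mem (f := Φ) hmem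
      rw [Submodule.map_span] at himg
      refine Submodule.span_mono ?_ himg
      rintro - ⟨-, ⟨q, hq, rfl⟩, rfl⟩
      refine ⟨fun k => ∑ k', M k k' * q k', fun row => ?_, ?_⟩
      · refine Fin.cases ?_ (fun row => ?_) row
        · exact ha q
        · rw [← hswapQ row q]
          exact hq row
      · funext k
        show ((∑ k', M k k' * q k' : ℚ) : ℝ) = ∑ k', (M k k' : ℝ) * ((q k' : ℚ) : ℝ)
        push_cast
        rfl


lemma mulVec_comb {m n : ℕ} {α : Type} [Fintype α] (L : Matrix α (Fin n) ℤ)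
    (a : Fin m → ℤ) (lam : Fin m → Fin n → ℤ) (β : α) :
    L.mulVec (fun i => ∑ j, a j * lam j i) β = ∑ j, a j * L.mulVec (lam j) β := by
  simp only [Matrix.mulVec, dotProduct, Finset.mul_sum]
  rw [Finset.sum_comm]
  exact Finset.sum_congr rfl fun j _ => Finset.sum_congr rfl fun i _ => by ring

lemma Kker_comb {p t n m : ℕ} (L : Matrix (Fin p ⊕ Fin t) (Fin n) ℤ) (d : Fin t → ℤ)
    (a : Fin m → ℤ) (lam : Fin m → Fin n → ℤ) (h : ∀ j, lam j ∈ Kker L d) :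
    (fun i => ∑ j, a j * lam j i) ∈ Kker L d := by
  constructor
  · intro jj
    rw [mulVec_comb]
    refine Finset.sum_eq_zero fun j _ => ?_
    rw [(h j).1 jj, mul_zero]
  · intro jj
    rw [mulVec_comb]
    exact Finset.dvd_sum fun j _ => ((h j).2 jj).mul_left _

lemma zero_mem_E {p t n r : ℕ} (L : Matrix (Fin p ⊕ Fin t) (Fin n) ℤ) (d : Fin t → ℤ) :
    (0 : Fin n → ℤ) ∈ Kker L d ∩ NNcone r n :=
  ⟨⟨fun j => by simp, fun j => by simp⟩, fun i _ => le_refl 0⟩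

lemma finite_imp_eq_zero {p t n r : ℕ} (L : Matrix (Fin p ⊕ Fin t) (Fin n) ℤ) (d : Fin t → ℤ)
    (hfin : (Kker L d ∩ NNcone r n).Finite) : Kker L d ∩ NNcone r n = {0} := by
  by_contra hne
  rw [Set.eq_singleton_iff_unique_mem] at hne
  push_neg at hne
  obtain ⟨μ, hμE, hμ0⟩ := hne (zero_mem_E L d)
  obtain ⟨i0, hi0⟩ : ∃ i0, μ i0 ≠ 0 := by
    by_contra h
    push_neg at h
    exact hμ0 (funext fun i => h i)
  refine hfin.not_infinite (Set.infinite_of_injective_forall_mem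
    (f := fun k : ℕ => fun i => ((k : ℤ) + 1) * μ i) ?_ ?_)
  · intro k l hkl
    have h1 : ((k : ℤ) + 1) * μ i0 = ((l : ℤ) + 1) * μ i0 := congrFun hkl i0
    have h2 : (k : ℤ) + 1 = (l : ℤ) + 1 := mul_right_cancel₀ hi0 h1
    exact_mod_cast (by linarith : (k : ℤ) = l)
  · intro k
    refine ⟨⟨fun jj => ?_, fun jj => ?_⟩, fun i hir => ?_⟩
    · show (L.mulVec fun i => ((k : ℤ) + 1) * μ i) (Sum.inl jj) = 0
      have : (fun i => ((k : ℤ) + 1) * μ i) = ((k : ℤ) + 1) • μ := by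
        funext i; simp [mul_comm]
      rw [this, Matrix.mulVec_smul, Pi.smul_apply, hμE.1.1 jj, smul_zero]
    · show d jj ∣ (L.mulVec fun i => ((k : ℤ) + 1) * μ i) (Sum.inr jj)
      have : (fun i => ((k : ℤ) + 1) * μ i) = ((k : ℤ) + 1) • μ := by
        funext i; simp [mul_comm]
      rw [this, Matrix.mulVec_smul, Pi.smul_apply, smul_eq_mul]
      exact (hμE.1.2 jj).mul_left _
    · exact mul_nonneg (by positivity) (hμE.2 i hir)

lemma hard_span {r p t n : ℕ} (L : Matrix (Fin p ⊕ Fin t) (Fin n) ℤ) (d : Fin t → ℤ)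
    (hzero : ∀ μ ∈ Kker L d ∩ NNcone r n, μ = 0) (x : Fin n → ℝ)
    (hx : x ∈ Submodule.span ℝ ((fun lam : Fin n → ℤ => fun i => (lam i : ℝ)) '' Kker L d))
    (hxnn : ∀ i : Fin n, (i : ℕ) < r → 0 ≤ x i) : x = 0 := by
  classical
  by_contra hx0
  obtain ⟨i0, hi0⟩ : ∃ i0, x i0 ≠ 0 := by
    by_contra h; push_neg at h; exact hx0 (funext fun i => h i)
  obtain ⟨m, co1, g, hg⟩ := Submodule.mem_span_set'.1 hx
  have hgm := fun j => (g j).2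
  choose lam hlamK hlamcast using hgm
  have hxi : ∀ i, x i = ∑ j, co1 j * ((lam j i : ℤ) : ℝ) := by
    intro i
    rw [← hg, Finset.sum_apply]
    refine Finset.sum_congr rfl fun j _ => ?_
    rw [Pi.smul_apply, smul_eq_mul, ← hlamcast j]
  -- the system of equations cutting out the zero coordinates of x
  set z := Fintype.card {i : Fin n // x i = 0} with hz
  set e : Fin z ≃ {i : Fin n // x i = 0} := (Fintype.equivFin {i : Fin n // x i = 0}).symm with he
  set A : Fin z → Fin m → ℚ := fun row j => ((lam j ↑(e row) : ℤ) : ℚ) with hA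
  have hcond : ∀ row, ∑ j, ((A row j : ℚ) : ℝ) * co1 j = 0 := by
    intro row
    have h0 : x ↑(e row) = 0 := (e row).2
    rw [hxi] at h0
    rw [← h0]
    refine Finset.sum_congr rfl fun j _ => ?_
    rw [hA]
    push_cast
    ring
  have hker := kerDense z (Fin m) A co1 hcond
  obtain ⟨N, co2, w, hw⟩ := Submodule.mem_span_set'.1 hker
  have hwm := fun t2 => (w t2).2
  choose qv hqvS hqvcast using hwm
  have hco1 : ∀ j, co1 j = ∑ t2, co2 t2 * ((qv t2 j : ℚ) : ℝ) := by
    intro j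
    rw [← hw, Finset.sum_apply]
    refine Finset.sum_congr rfl fun t2 _ => ?_
    rw [Pi.smul_apply, smul_eq_mul, ← hqvcast t2]
  -- choose rational approximations of the coefficients
  set Fne : Finset (Fin n) := Finset.univ.filter (fun i => x i ≠ 0) with hFne
  have hi0mem : i0 ∈ Fne := by simp [hFne, hi0]
  set η : ℝ := Fne.inf' (show Fne.Nonempty from ⟨i0, hi0mem⟩) (fun i => |x i|) with hηdef
  have hη : 0 < η := by
    rw [hηdef, Finset.lt_inf'_iff]
    intro i hi
    rw [hFne, Finset.mem_filter] at hi
    exact abs_pos.2 hi.2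
  have hηle : ∀ i, x i ≠ 0 → η ≤ |x i| := by
    intro i hi
    exact Finset.inf'_le _ (by simp [hFne, hi])
  set C : ℝ := 1 + ∑ t2, ∑ j, ∑ i, |((qv t2 j : ℚ) : ℝ)| * |((lam j i : ℤ) : ℝ)| with hC
  have hC0 : 0 < C := by
    rw [hC]
    have : (0:ℝ) ≤ ∑ t2, ∑ j, ∑ i, |((qv t2 j : ℚ) : ℝ)| * |((lam j i : ℤ) : ℝ)| := by
      refine Finset.sum_nonneg fun t2 _ => Finset.sum_nonneg fun j _ => Finset.sum_nonneg
        fun i _ => mul_nonneg (abs_nonneg _) (abs_nonneg _)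
    linarith
  set ε : ℝ := η / (2 * C) with hε
  have hε0 : 0 < ε := div_pos hη (by linarith)
  have hnear := fun t2 : Fin N => exists_rat_near (co2 t2) hε0
  choose ρ hρ using hnear
  set q : Fin m → ℚ := fun j => ∑ t2, ρ t2 * qv t2 j with hq
  set y : Fin n → ℚ := fun i => ∑ j, q j * (lam j i : ℚ) with hy
  -- y vanishes on the zero coordinates of x
  have hyZ : ∀ i, x i = 0 → y i = 0 := by
    intro i h
    have hrow := e.apply_symm_apply ⟨i, h⟩
    have hS : ∑ j, A (e.symm ⟨i, h⟩) j * q j = 0 := by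
      have hqmem : ∀ row, ∑ j, A row j * q j = 0 := by
        intro row
        rw [hq]
        simp only [Finset.mul_sum]
        rw [Finset.sum_comm]
        refine Finset.sum_eq_zero fun t2 _ => ?_
        have := hqvS t2 row
        calc ∑ j, A row j * (ρ t2 * qv t2 j) = ρ t2 * ∑ j, A row j * qv t2 j := by
              rw [Finset.mul_sum]; exact Finset.sum_congr rfl fun j _ => by ring
          _ = 0 := by rw [this, mul_zero]
      exact hqmem _
    simp only [hA, hrow] at hS
    rw [hy, ← hS]
    exact Finset.sum_congr rfl fun j _ => by ring
  -- the approximation error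
  have herr : ∀ i, |((y i : ℚ) : ℝ) - x i| ≤ η / 2 := by
    intro i
    have hqd : ∀ j, ((q j : ℚ) : ℝ) - co1 j
        = ∑ t2, ((ρ t2 : ℝ) - co2 t2) * ((qv t2 j : ℚ) : ℝ) := by
      intro j
      rw [hco1 j, hq]
      push_cast
      rw [← Finset.sum_sub_distrib]
      exact Finset.sum_congr rfl fun t2 _ => by ring
    have hyd : ((y i : ℚ) : ℝ) - x i
        = ∑ j, (((q j : ℚ) : ℝ) - co1 j) * ((lam j i : ℤ) : ℝ) := by
      rw [hxi i, hy]
      push_cast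
      rw [← Finset.sum_sub_distrib]
      exact Finset.sum_congr rfl fun j _ => by ring
    rw [hyd]
    have hb1 : ∀ j, |(((q j : ℚ) : ℝ) - co1 j)| ≤ ε * ∑ t2, |((qv t2 j : ℚ) : ℝ)| := by
      intro j
      rw [hqd j]
      refine le_trans (Finset.abs_sum_le_sum_abs _ _) ?_
      rw [Finset.mul_sum]
      refine Finset.sum_le_sum fun t2 _ => ?_
      rw [abs_mul]
      refine mul_le_mul_of_nonneg_right ?_ (abs_nonneg _)
      rw [abs_sub_comm]
      exact (hρ t2).le
    refine le_trans (Finset.abs_sum_le_sum_abs _ _) ?_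
    have hb2 : ∑ j, |(((q j : ℚ) : ℝ) - co1 j) * ((lam j i : ℤ) : ℝ)|
        ≤ ε * ∑ j, ∑ t2, |((qv t2 j : ℚ) : ℝ)| * |((lam j i : ℤ) : ℝ)| := by
      rw [Finset.mul_sum]
      refine Finset.sum_le_sum fun j _ => ?_
      rw [abs_mul]
      calc |(((q j : ℚ) : ℝ) - co1 j)| * |((lam j i : ℤ) : ℝ)|
          ≤ (ε * ∑ t2, |((qv t2 j : ℚ) : ℝ)|) * |((lam j i : ℤ) : ℝ)| :=
            mul_le_mul_of_nonneg_right (hb1 j) (abs_nonneg _)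
        _ = ε * ∑ t2, |((qv t2 j : ℚ) : ℝ)| * |((lam j i : ℤ) : ℝ)| := by
            rw [mul_assoc, Finset.sum_mul]
      -- done
    refine le_trans hb2 ?_
    have hb3 : ∑ j, ∑ t2, |((qv t2 j : ℚ) : ℝ)| * |((lam j i : ℤ) : ℝ)| ≤ C := by
      rw [hC]
      have h4 : ∑ j, ∑ t2, |((qv t2 j : ℚ) : ℝ)| * |((lam j i : ℤ) : ℝ)|
          = ∑ t2, ∑ j, |((qv t2 j : ℚ) : ℝ)| * |((lam j i : ℤ) : ℝ)| := Finset.sum_comm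
      rw [h4]
      have h5 : ∑ t2, ∑ j, |((qv t2 j : ℚ) : ℝ)| * |((lam j i : ℤ) : ℝ)|
          ≤ ∑ t2, ∑ j, ∑ i', |((qv t2 j : ℚ) : ℝ)| * |((lam j i' : ℤ) : ℝ)| := by
        refine Finset.sum_le_sum fun t2 _ => Finset.sum_le_sum fun j _ => ?_
        exact Finset.single_le_sum (f := fun i' => |((qv t2 j : ℚ) : ℝ)| * |((lam j i' : ℤ) : ℝ)|)
          (fun i' _ => mul_nonneg (abs_nonneg _) (abs_nonneg _)) (Finset.mem_univ i)
      linarith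
    calc ε * ∑ j, ∑ t2, |((qv t2 j : ℚ) : ℝ)| * |((lam j i : ℤ) : ℝ)|
        ≤ ε * C := mul_le_mul_of_nonneg_left hb3 hε0.le
      _ = η / 2 := by rw [hε]; field_simp
  -- sign conclusions
  have hsign : ∀ i, x i ≠ 0 → ((y i : ℚ) : ℝ) ≠ 0 ∧ (0 < x i → (0:ℝ) < ((y i : ℚ) : ℝ)) := by
    intro i hi
    have h1 := herr i
    have h2 := hηle i hi
    have h3 := abs_le.1 h1
    constructor
    · intro h0
      rw [h0] at h1
      rw [abs_sub_comm, sub_zero] at h1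
      linarith
    · intro hpos
      have : |x i| = x i := abs_of_pos hpos
      rw [this] at h2
      linarith [h3.1]
  have hynn : ∀ i : Fin n, (i : ℕ) < r → 0 ≤ y i := by
    intro i hir
    by_cases h : x i = 0
    · rw [hyZ i h]
    · have hpos : 0 < x i := lt_of_le_of_ne (hxnn i hir) (Ne.symm h)
      have := (hsign i h).2 hpos
      have : (0:ℚ) < y i := by exact_mod_cast this
      exact this.le
  have hyi0 : y i0 ≠ 0 := by
    have := (hsign i0 hi0).1
    exact_mod_cast fun h => this (by rw [h]; norm_num)
  -- clear denominators
  set D : ℤ := ∏ j, ((q j).den : ℤ) with hD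
  have hD0 : 0 < D := Finset.prod_pos fun j _ => by exact_mod_cast (q j).den_pos
  set a : Fin m → ℤ := fun j => (q j).num * ∏ j' ∈ Finset.univ.erase j, ((q j').den : ℤ) with ha
  have haq : ∀ j, ((a j : ℤ) : ℚ) = (D : ℚ) * q j := by
    intro j
    rw [ha, hD]
    push_cast
    rw [← Finset.prod_erase_mul _ _ (Finset.mem_univ j)]
    push_cast
    rw [mul_assoc, ← Rat.den_mul_eq_num]
    ring
  set μ : Fin n → ℤ := fun i => ∑ j, a j * lam j i with hμ
  have hμcast : ∀ i, ((μ i : ℤ) : ℚ) = (D : ℚ) * y i := by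
    intro i
    simp only [hμ, hy]
    push_cast
    rw [Finset.mul_sum]
    refine Finset.sum_congr rfl fun j _ => ?_
    rw [haq j]
    ring
  have hμK : μ ∈ Kker L d := by
    rw [hμ]; exact Kker_comb L d a lam hlamK
  have hμC : μ ∈ NNcone r n := by
    intro i hir
    have h1 : (0:ℚ) ≤ ((μ i : ℤ) : ℚ) := by
      rw [hμcast i]
      exact mul_nonneg (by exact_mod_cast hD0.le) (hynn i hir)
    exact_mod_cast h1
  have hμ0 := hzero μ ⟨hμK, hμC⟩
  have hμi0 : μ i0 = 0 := by rw [hμ0]; rfl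
  have hcast0 : ((μ i0 : ℤ) : ℚ) = 0 := by exact_mod_cast hμi0
  rw [hμcast i0] at hcast0
  have hD0' : ((D : ℤ) : ℚ) ≠ 0 := by exact_mod_cast hD0.ne'
  rcases mul_eq_zero.1 hcast0 with h | h
  · exact hD0' h
  · exact hyi0 h

/-- the following are equivalent:
(1) `𝔎 ∩ (ℕ^r × ℤ^s) = {0}` (`S₀ = k`);
(2) `𝔎 ∩ (ℕ^r × ℤ^s)` is finite (`S₀` is finite dimensional);
(3) the real span of `𝔎` meets the cone `ℝ_{≥0}^r × ℝ^s` only in `0`. -/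
theorem stmt5 {r s p t : ℕ} (n : ℕ) (hn : n = r + s)
    (L : Matrix (Fin p ⊕ Fin t) (Fin n) ℤ) (d : Fin t → ℤ) (hd : ∀ j, 0 < d j) :
    ((Kker L d ∩ NNcone r n = {0}) ↔ (Kker L d ∩ NNcone r n).Finite) ∧
    ((Kker L d ∩ NNcone r n).Finite ↔
      ∀ x : Fin n → ℝ,
        x ∈ Submodule.span ℝ ((fun lam : Fin n → ℤ => fun i => (lam i : ℝ)) '' Kker L d) →
        (∀ i : Fin n, (i : ℕ) < r → 0 ≤ x i) → x = 0) := by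
  constructor
  · constructor
    · intro h; rw [h]; exact Set.finite_singleton 0
    · exact finite_imp_eq_zero L d
  · constructor
    · intro hfin
      have hz := finite_imp_eq_zero L d hfin
      intro x hx hxnn
      refine hard_span L d (fun μ hμ => ?_) x hx hxnn
      rw [hz] at hμ; exact hμ
    · intro h3
      have heq : Kker L d ∩ NNcone r n = {0} := by
        apply Set.eq_singleton_iff_unique_mem.2
        refine ⟨zero_mem_E L d, fun μ hμ => ?_⟩
        have hcast : (fun i => ((μ i : ℤ) : ℝ)) = 0 := by
          apply h3
          · exact Submodule.subset_span ⟨μ, hμ.1, rfl⟩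
          · intro i hir
            have := hμ.2 i hir
            exact_mod_cast this
        funext i
        have h5 := congrFun hcast i
        rw [Pi.zero_apply] at h5
        show μ i = 0
        exact_mod_cast h5
      rw [heq]; exact Set.finite_singleton 0
end

section
/- Suppose r ≥ 1 and the grading is positive, i.e., 𝔎 ∩ (ℕ^r × ℤ^s) = {0}. Then p > s. Equivalently: if r ≥ 1 and p ≤ s, then there exists a nonzero λ ∈ ℕ^r × ℤ^s with λ ∈ 𝔎. -/
open Matrix

lemma clear_denoms (q : ℚ) (m : ℤ) (h : (q.den : ℤ) ∣ m) : ∃ k : ℤ, (k : ℚ) = m * q := by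
  obtain ⟨c, hc⟩ := h
  refine ⟨c * q.num, ?_⟩
  have hden : ((q.den : ℚ)) ≠ 0 := by exact_mod_cast q.den_pos.ne'
  have hq : (q.num : ℚ) = q * q.den := (div_eq_iff hden).mp (Rat.num_div_den q)
  push_cast
  rw [hq, hc]
  push_cast
  ring

/-- From a rational solution, get an integer solution. -/
lemma exists_int_sol {r s p t : ℕ} {n : ℕ} (hn : n = r + s)
    (L : Matrix (Fin p ⊕ Fin t) (Fin n) ℤ) (d : Fin t → ℤ) (hd : ∀ j, 0 < d j)
    (v : Fin n → ℚ) (hv0 : v ≠ 0)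
    (hker : ∀ j : Fin p, ((L.map (Int.cast : ℤ → ℚ)).mulVec v) (Sum.inl j) = 0)
    (hnn : ∀ i : Fin n, (i : ℕ) < r → 0 ≤ v i) :
    ∃ lam : Fin n → ℤ, lam ≠ 0 ∧ lam ∈ Kker L d ∧ lam ∈ NNcone r n := by
  set m : ℤ := ∏ i : Fin n, ((v i).den : ℤ) with hm
  have hmpos : 0 < m := Finset.prod_pos fun i _ => by exact_mod_cast (v i).den_pos
  have hdvd : ∀ i : Fin n, ((v i).den : ℤ) ∣ m := fun i =>
    Finset.dvd_prod_of_mem _ (Finset.mem_univ i)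
  have hu : ∀ i : Fin n, ∃ k : ℤ, (k : ℚ) = m * v i := fun i =>
    clear_denoms (v i) m (hdvd i)
  choose u hu using hu
  set D : ℤ := ∏ j : Fin t, d j with hD
  have hDpos : 0 < D := Finset.prod_pos fun j _ => hd j
  refine ⟨fun i => D * u i, ?_, ⟨?_, ?_⟩, ?_⟩
  · -- nonzero
    intro h
    apply hv0
    funext i
    have := congrFun h i
    simp only [Pi.zero_apply, mul_eq_zero] at this
    rcases this with h1 | h1
    · exact absurd h1 hDpos.ne'
    · have : (u i : ℚ) = 0 := by exact_mod_cast h1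
      rw [hu i] at this
      rcases mul_eq_zero.mp this with h2 | h2
      · exact absurd h2 (by exact_mod_cast hmpos.ne')
      · simpa using h2
  · -- inl rows vanish
    intro j
    have key : ((L.mulVec (fun i => D * u i) (Sum.inl j) : ℤ) : ℚ)
        = (D : ℚ) * ((m : ℚ) * ((L.map (Int.cast : ℤ → ℚ)).mulVec v) (Sum.inl j)) := by
      simp only [Matrix.mulVec, dotProduct, Matrix.map_apply]
      push_cast
      rw [Finset.mul_sum, Finset.mul_sum]
      refine Finset.sum_congr rfl fun i _ => ?_
      rw [hu i]; ring
    rw [hker j, mul_zero, mul_zero] at key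
    exact_mod_cast key
  · -- inr rows divisible
    intro j
    have : L.mulVec (fun i => D * u i) (Sum.inr j) = D * L.mulVec u (Sum.inr j) := by
      simp only [Matrix.mulVec, dotProduct, Finset.mul_sum]
      exact Finset.sum_congr rfl fun i _ => by ring
    rw [this]
    exact Dvd.dvd.mul_right (Finset.dvd_prod_of_mem _ (Finset.mem_univ j)) _
  · -- nonneg
    intro i hi
    have : (0 : ℚ) ≤ (u i : ℚ) := by
      rw [hu i]
      exact mul_nonneg (by exact_mod_cast hmpos.le) (hnn i hi)
    have hui : (0 : ℤ) ≤ u i := by exact_mod_cast this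
    exact mul_nonneg hDpos.le hui


/-- if `r ≥ 1` and the grading is positive
(`𝔎 ∩ (ℕ^r × ℤ^s) = {0}`), then `p > s`. -/
theorem stmt6 {r s p t : ℕ} (n : ℕ) (hn : n = r + s) (hr : 1 ≤ r)
    (L : Matrix (Fin p ⊕ Fin t) (Fin n) ℤ) (d : Fin t → ℤ) (hd : ∀ j, 0 < d j)
    (hpos : Kker L d ∩ NNcone r n = {0}) :
    s < p := by
  by_contra hps
  push_neg at hps  -- p ≤ s
  -- rational matrix and its inl-part as a linear map
  set Lq : Matrix (Fin p ⊕ Fin t) (Fin n) ℚ := L.map (Int.cast : ℤ → ℚ) with hLq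
  set A : Matrix (Fin p) (Fin n) ℚ := Lq.submatrix Sum.inl id with hA
  set f : (Fin n → ℚ) →ₗ[ℚ] (Fin p → ℚ) := A.mulVecLin with hf
  have hrank : r ≤ Module.finrank ℚ (LinearMap.ker f) := by
    have h1 := LinearMap.finrank_range_add_finrank_ker f
    have h2 : Module.finrank ℚ (LinearMap.range f) ≤ p := by
      calc Module.finrank ℚ (LinearMap.range f)
          ≤ Module.finrank ℚ (Fin p → ℚ) := Submodule.finrank_le _
        _ = p := by simp
    have h3 : Module.finrank ℚ (Fin n → ℚ) = n := by simp
    omega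
  set e : Fin r → Fin n := fun i => ⟨i, by omega⟩ with he
  set π : LinearMap.ker f →ₗ[ℚ] (Fin r → ℚ) :=
    (LinearMap.funLeft ℚ ℚ e).comp (LinearMap.ker f).subtype with hπ
  have key : ∃ v : Fin n → ℚ, v ≠ 0 ∧ f v = 0 ∧ ∀ i : Fin n, (i : ℕ) < r → 0 ≤ v i := by
    by_cases hinj : Function.Injective π
    · -- π is bijective; pick preimage of all-ones
      have hfr : Module.finrank ℚ (LinearMap.ker f) = Module.finrank ℚ (Fin r → ℚ) := by
        have hle := LinearMap.finrank_le_finrank_of_injective hinj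
        have : Module.finrank ℚ (Fin r → ℚ) = r := by simp
        omega
      have hsurj := (LinearMap.injective_iff_surjective_of_finrank_eq_finrank hfr).mp hinj
      obtain ⟨w, hw⟩ := hsurj (fun _ => 1)
      refine ⟨w.1, ?_, w.2, ?_⟩
      · intro h
        have h0 : π w ⟨0, hr⟩ = 1 := by rw [hw]
        have : π w ⟨0, hr⟩ = w.1 (e ⟨0, hr⟩) := rfl
        rw [this, h] at h0
        simp at h0
      · intro i hi
        have : w.1 i = π w ⟨i, hi⟩ := by
          have : e ⟨i.1, hi⟩ = i := by simp [he]
          simp [hπ, LinearMap.funLeft, this]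
        rw [this, hw]
        norm_num
    · -- some nonzero element of ker f has zero first r coordinates
      rw [← LinearMap.ker_eq_bot] at hinj
      obtain ⟨w, hw, hw0⟩ := Submodule.exists_mem_ne_zero_of_ne_bot hinj
      refine ⟨w.1, ?_, w.2, ?_⟩
      · intro h
        exact hw0 (Subtype.ext h)
      · intro i hi
        have hπw : π w = 0 := hw
        have : w.1 i = π w ⟨i, hi⟩ := by
          have : e ⟨i.1, hi⟩ = i := by simp [he]
          simp [hπ, LinearMap.funLeft, this]
        rw [this, hπw]
        simp
  obtain ⟨v, hv0, hfv, hnn⟩ := key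
  have hker : ∀ j : Fin p, (Lq.mulVec v) (Sum.inl j) = 0 := by
    intro j
    have := congrFun hfv j
    simpa [hf, hA, Matrix.mulVecLin, Matrix.mulVec, dotProduct,
      Matrix.submatrix_apply] using this
  obtain ⟨lam, hlam0, hK, hN⟩ := exists_int_sol hn L d hd v hv0 hker hnn
  have : lam ∈ Kker L d ∩ NNcone r n := ⟨hK, hN⟩
  rw [hpos] at this
  exact hlam0 this
end

section
/- Suppose n = p + l with l ≤ r and that L has the special form: the submatrix of L consisting of rows 1 through p and columns l+1 through n equals d·I_p for some nonzero integer d. Let L_1 be the submatrix of L consisting of rows 1 through p and columns 1 through l, and for 1 ≤ i ≤ l let ρ_i denote the i-th column of L_1. If the grading is positive, i.e., 𝔎 ∩ (ℕ^r × ℤ^s) = {0}, then ρ_i ≠ 0 for all i = 1, …, l. -/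
open Matrix

/-- suppose `n = p + l` with `l ≤ r` and `L` has the special form: the
submatrix of rows `1..p` and columns `l+1..n` is `d·I_p` (`d ≠ 0`). Let `ρ_i`, `1 ≤ i ≤ l`
be the columns of `L₁` (rows `1..p`, columns `1..l`). If the grading is positive, i.e.
`𝔎 ∩ (ℕ^r × ℤ^s) = {0}`, then `ρ_i ≠ 0` for all `i = 1, …, l`. -/
theorem stmt8 {r s p t l : ℕ} (n : ℕ) (hn : n = r + s) (hnl : n = p + l) (hlr : l ≤ r)
    (L : Matrix (Fin p ⊕ Fin t) (Fin n) ℤ) (dd : Fin t → ℤ) (hdd : ∀ j, 0 < dd j)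
    (d : ℤ) (hd : d ≠ 0)
    (hspecial : ∀ (j : Fin p) (i : Fin n), l ≤ (i : ℕ) →
      L (Sum.inl j) i = if (i : ℕ) = l + (j : ℕ) then d else 0)
    (hpos : Kker L dd ∩ NNcone r n = {0}) :
    ∀ i : Fin n, (i : ℕ) < l → ∃ j : Fin p, L (Sum.inl j) i ≠ 0 := by
  intro i hi
  by_contra h
  push_neg at h
  set c : ℤ := ∏ j, dd j with hc
  have hcpos : 0 < c := Finset.prod_pos (fun j _ => hdd j)
  have hmem : Pi.single i c ∈ Kker L dd ∩ NNcone r n := by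
    constructor
    · constructor
      · intro j
        simp [Matrix.mulVec_single, h j]
      · intro j
        simp only [Matrix.mulVec_single]
        exact Dvd.dvd.mul_left (Finset.dvd_prod_of_mem dd (Finset.mem_univ j)) _
    · intro k _
      rcases eq_or_ne k i with rfl | hne
      · simpa using hcpos.le
      · simp [Pi.single_eq_of_ne hne]
  rw [hpos] at hmem
  have h0 : Pi.single i c = (0 : Fin n → ℤ) := hmem
  have := congrFun h0 i
  simp at this
  omega
end

section
/- Suppose n = p + l and the m×n integer matrix L has the special form in which the submatrix formed by rows 1 through p and columns l+1 through n equals d·I_p for some nonzero integer d. Let K be an n×l integer matrix of rank l such that the product of the first p rows of L with K is the zero p×l matrix. Then the first l rows v_1, …, v_l of K are linearly independent over ℚ (hence form a basis of ℝ^l). -/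
open Matrix

/-- suppose `n = p + l` and the `m × n` integer matrix `L` has the special
form in which the submatrix of rows `1..p` and columns `l+1..n` equals `d·I_p` with
`d ≠ 0`. Let `K` be an `n × l` integer matrix of rank `l` (columns linearly independent
over `ℚ`) such that the product of the first `p` rows of `L` with `K` is zero. Then the
first `l` rows `v_1, …, v_l` of `K` are linearly independent over `ℚ`. -/
theorem stmt9 {m n p l : ℕ} (hn : n = p + l) (hpm : p ≤ m)
    (L : Matrix (Fin m) (Fin n) ℤ) (d : ℤ) (hd : d ≠ 0)
    (hspecial : ∀ j : Fin m, (j : ℕ) < p → ∀ i : Fin n, l ≤ (i : ℕ) →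
      L j i = if (i : ℕ) = l + (j : ℕ) then d else 0)
    (K : Matrix (Fin n) (Fin l) ℤ)
    (hK : LinearIndependent ℚ (fun c : Fin l => fun i : Fin n => (K i c : ℚ)))
    (hLK : ∀ j : Fin m, (j : ℕ) < p → ∀ c : Fin l, ∑ i : Fin n, L j i * K i c = 0) :
    LinearIndependent ℚ
      (fun i : Fin l => fun c : Fin l => (K (Fin.castLE (by omega) i) c : ℚ)) := by
  have hln : l ≤ n := by omega
  -- key: for j < p, d * K (l+j) c + ∑_{i<l} L j i * K i c = 0  (over ℚ)
  have key : ∀ (j : Fin m) (_hj : (j : ℕ) < p), ∀ c : Fin l,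
      (d : ℚ) * (K ⟨l + (j : ℕ), by omega⟩ c : ℚ)
        + ∑ i ∈ Finset.univ.filter (fun i : Fin n => (i : ℕ) < l),
            (L j i : ℚ) * (K i c : ℚ) = 0 := by
    intro j hj c
    have h1 : ∑ i : Fin n, (L j i : ℚ) * (K i c : ℚ) = 0 := by
      exact_mod_cast hLK j hj c
    rw [← Finset.sum_filter_add_sum_filter_not Finset.univ
      (fun i : Fin n => (i : ℕ) < l)] at h1
    set i₀ : Fin n := ⟨l + (j : ℕ), by omega⟩ with hi₀
    have h2 : ∑ i ∈ Finset.univ.filter (fun i : Fin n => ¬ (i : ℕ) < l),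
        (L j i : ℚ) * (K i c : ℚ) = (d : ℚ) * (K i₀ c : ℚ) := by
      rw [Finset.sum_eq_single i₀]
      · rw [hspecial j hj i₀ (by simp [hi₀])]
        simp [hi₀]
      · intro b hb hne
        have hbl : l ≤ (b : ℕ) := by
          have := (Finset.mem_filter.1 hb).2
          omega
        rw [hspecial j hj b hbl]
        have : (b : ℕ) ≠ l + (j : ℕ) := fun h => hne (Fin.ext (by simp [hi₀, h]))
        simp [this]
      · intro h
        exact absurd (Finset.mem_filter.2 ⟨Finset.mem_univ _, by simp [hi₀]⟩) h
    rw [h2] at h1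
    linarith
  -- rows independent iff A unit iff cols independent
  rw [show (fun i : Fin l => fun c : Fin l => (K (Fin.castLE (by omega : l ≤ n) i) c : ℚ))
      = Matrix.row ((fun i c => (K (Fin.castLE hln i) c : ℚ)) : Matrix (Fin l) (Fin l) ℚ) from rfl]
  refine Matrix.linearIndependent_rows_iff_isUnit.2 (Matrix.linearIndependent_cols_iff_isUnit.1 ?_)
  rw [Fintype.linearIndependent_iff]
  intro g hg c0
  have hg' : ∀ i : Fin l, ∑ c : Fin l, g c * (K (Fin.castLE hln i) c : ℚ) = 0 := by
    intro i
    have := congrFun hg i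
    simpa [Matrix.col, Matrix.transpose, Finset.sum_apply] using this
  -- extend to all rows of K
  have hall : ∀ i : Fin n, ∑ c : Fin l, g c * (K i c : ℚ) = 0 := by
    intro i
    by_cases hi : (i : ℕ) < l
    · have := hg' ⟨(i : ℕ), hi⟩
      convert this using 2
      rfl
    · have hj : (i : ℕ) - l < p := by omega
      set j : Fin m := ⟨(i : ℕ) - l, by omega⟩ with hjdef
      have hjp : (j : ℕ) < p := hj
      have hi0 : i = (⟨l + (j : ℕ), by omega⟩ : Fin n) := Fin.ext (by simp [hjdef]; omega)
      have hmul : (d : ℚ) * ∑ c : Fin l, g c * (K i c : ℚ) = 0 := by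
        rw [Finset.mul_sum]
        have : ∀ c : Fin l, (d : ℚ) * (g c * (K i c : ℚ))
            = g c * (-(∑ i' ∈ Finset.univ.filter (fun i' : Fin n => (i' : ℕ) < l),
                (L j i' : ℚ) * (K i' c : ℚ))) := by
          intro c
          have := key j hjp c
          rw [← hi0] at this
          have : (d : ℚ) * (K i c : ℚ)
              = -(∑ i' ∈ Finset.univ.filter (fun i' : Fin n => (i' : ℕ) < l),
                (L j i' : ℚ) * (K i' c : ℚ)) := by linarith
          linear_combination g c * this
        rw [Finset.sum_congr rfl (fun c _ => this c)]
        simp only [mul_neg, ← Finset.sum_neg_distrib, Finset.mul_sum]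
        rw [Finset.sum_comm]
        apply Finset.sum_eq_zero
        intro i' hi'
        have hi'l : (i' : ℕ) < l := (Finset.mem_filter.1 hi').2
        have : ∑ c : Fin l, g c * ((L j i' : ℚ) * (K i' c : ℚ))
            = (L j i' : ℚ) * ∑ c : Fin l, g c * (K i' c : ℚ) := by
          rw [Finset.mul_sum]; apply Finset.sum_congr rfl; intro c _; ring
        have hK0 : ∑ c : Fin l, g c * (K i' c : ℚ) = 0 := by
          have := hg' ⟨(i' : ℕ), hi'l⟩
          convert this using 2
          rfl
        simp [this, hK0]
      have hd' : (d : ℚ) ≠ 0 := Int.cast_ne_zero.mpr hd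
      exact (mul_eq_zero.mp hmul).resolve_left hd'
    -- done
  -- now use hK
  rw [Fintype.linearIndependent_iff] at hK
  apply hK g _ c0
  funext i
  simpa [Finset.sum_apply] using hall i
end

section
/- The following statements are equivalent: (1) there exists φ ∈ ℕ^r × ℤ^s such that the set (φ + 𝔎) ∩ (ℕ^r × ℤ^s) is finite (equivalently, some nonzero graded component S_a, a in the degree semigroup, is finite-dimensional over k); (2) for every φ ∈ ℕ^r × ℤ^s the set (φ + 𝔎) ∩ (ℕ^r × ℤ^s) is finite (equivalently, every graded component S_a is finite-dimensional); (3) the real linear span of 𝔎 in ℝ^n intersects the cone ℝ_{≥0}^r × ℝ^s = {x ∈ ℝ^n : x_i ≥ 0 for 1 ≤ i ≤ r} only in 0 (equivalently, any fan compatible with the multigrading is not contained in a half-space). -/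
open Matrix

def KkerGrp {p t n : ℕ} (L : Matrix (Fin p ⊕ Fin t) (Fin n) ℤ) (d : Fin t → ℤ) :
    AddSubgroup (Fin n → ℤ) where
  carrier := Kker L d
  zero_mem' := by
    constructor <;> intro j <;> simp [Kker, Matrix.mulVec_zero]
  add_mem' := by
    rintro a b ⟨ha1, ha2⟩ ⟨hb1, hb2⟩
    constructor <;> intro j <;> simp only [Matrix.mulVec_add, Pi.add_apply]
    · rw [ha1 j, hb1 j, add_zero]
    · exact dvd_add (ha2 j) (hb2 j)
  neg_mem' := by
    rintro a ⟨ha1, ha2⟩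
    constructor <;> intro j <;> simp only [Matrix.mulVec_neg, Pi.neg_apply]
    · rw [ha1 j, neg_zero]
    · exact (ha2 j).neg_right

lemma mem_KkerGrp {p t n : ℕ} {L : Matrix (Fin p ⊕ Fin t) (Fin n) ℤ} {d : Fin t → ℤ}
    {v : Fin n → ℤ} : v ∈ KkerGrp L d ↔ v ∈ Kker L d := Iff.rfl

/-- Lemma B : a nonzero ray in the kernel inside the cone makes every component infinite. -/
lemma infB {n r : ℕ} (K : AddSubgroup (Fin n → ℤ)) {ν : Fin n → ℤ} (hν : ν ∈ K)
    (hνc : ∀ i : Fin n, (i : ℕ) < r → 0 ≤ ν i) (hν0 : ν ≠ 0)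
    (φ : Fin n → ℤ) (hφ : ∀ i : Fin n, (i : ℕ) < r → 0 ≤ φ i) :
    {lam : Fin n → ℤ | (∀ i : Fin n, (i : ℕ) < r → 0 ≤ lam i) ∧ lam - φ ∈ K}.Infinite := by
  obtain ⟨i1, hi1⟩ := Function.ne_iff.mp hν0
  have hi1' : ν i1 ≠ 0 := hi1
  refine Set.infinite_of_injective_forall_mem (f := fun k : ℕ => φ + k • ν) ?_ ?_
  · intro k k' hkk
    have h1 : φ i1 + (k : ℤ) * ν i1 = φ i1 + (k' : ℤ) * ν i1 := by
      have := congrFun hkk i1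
      simpa using this
    simp only [add_right_inj, mul_eq_mul_right_iff, Nat.cast_inj] at h1
    rcases h1 with h | h
    · exact h
    · exact absurd h hi1'
  · intro k
    constructor
    · intro i hi
      have : (0:ℤ) ≤ φ i + (k:ℤ) * ν i :=
        add_nonneg (hφ i hi) (mul_nonneg (by positivity) (hνc i hi))
      simpa using this
    · have : φ + k • ν - φ = k • ν := by abel
      rw [this]
      exact K.nsmul_mem hν k


/-- Lemma A : if the kernel meets the cone only in 0, every component is finite. -/
lemma finA {n r : ℕ} (hrn : r ≤ n) (K : AddSubgroup (Fin n → ℤ))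
    (hK : ∀ ν ∈ K, (∀ i : Fin n, (i : ℕ) < r → 0 ≤ ν i) → ν = 0)
    (φ : Fin n → ℤ) :
    {lam : Fin n → ℤ | (∀ i : Fin n, (i : ℕ) < r → 0 ≤ lam i) ∧ lam - φ ∈ K}.Finite := by
  set S := {lam : Fin n → ℤ | (∀ i : Fin n, (i : ℕ) < r → 0 ≤ lam i) ∧ lam - φ ∈ K} with hS
  by_contra hnf
  have hinf : S.Infinite := hnf
  set g : (Fin n → ℤ) → (Fin r → ℕ) := fun lam i => (lam (Fin.castLE hrn i)).toNat with hg
  -- key: comparisons under g give kernel elements in the cone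
  have key : ∀ a ∈ S, ∀ b ∈ S, g a ≤ g b →
      b - a ∈ K ∧ ∀ i : Fin n, (i : ℕ) < r → 0 ≤ (b - a) i := by
    intro a ha b hb hab
    refine ⟨by simpa using K.sub_mem hb.2 ha.2, ?_⟩
    intro i hi
    have h := hab ⟨(i : ℕ), hi⟩
    have hci : Fin.castLE hrn ⟨(i : ℕ), hi⟩ = i := by ext; simp
    have ha2 := ha.1 i hi
    have hb2 := hb.1 i hi
    simp only [hg] at h
    rw [hci] at h
    simp only [Pi.sub_apply, sub_nonneg]
    omega
  have hginj : Set.InjOn g S := by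
    intro a ha b hb hab
    have h1 := key a ha b hb (le_of_eq hab)
    have h2 := hK _ h1.1 h1.2
    have : b = a := by rwa [sub_eq_zero] at h2
    exact this.symm
  have hT : (g '' S).Infinite := hinf.image hginj
  have hpwo : (g '' S).IsPWO := by
    haveI h : ∀ (i : Fin r), IsWellOrder ℕ (· < ·) := fun _ => inferInstance
    exact (Set.IsPWO.pi (fun _ => Set.IsPWO.of_linearOrder (Set.univ : Set ℕ))).mono (fun x _ => by simp)
  let f : ℕ ↪ ↥(g '' S) := hT.natEmbedding
  obtain ⟨m1, m2, hm, hle⟩ := Set.PartiallyWellOrderedOn.exists_lt hpwo (f := fun k => ((f k : ↥(g '' S)) : Fin r → ℕ)) (fun k => (f k).2)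
  have hne : ((f m1 : ↥(g '' S)) : Fin r → ℕ) ≠ ((f m2 : ↥(g '' S)) : Fin r → ℕ) := by
    intro h
    exact absurd (f.injective (Subtype.ext h)) (Nat.ne_of_lt hm)
  obtain ⟨a, ha, hga⟩ := (f m1).2
  obtain ⟨b, hb, hgb⟩ := (f m2).2
  rw [← hga, ← hgb] at hle hne
  have h1 := key a ha b hb hle
  have h2 := hK _ h1.1 h1.2
  have : b = a := by rwa [sub_eq_zero] at h2
  exact hne (by rw [this])


/-- If the kernel lattice meets the cone only in `0`, then so does its real span. -/
lemma hardLem {n r : ℕ} (K : AddSubgroup (Fin n → ℤ))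
    (hK : ∀ ν ∈ K, (∀ i : Fin n, (i : ℕ) < r → 0 ≤ ν i) → ν = 0)
    (x : Fin n → ℝ)
    (hx : x ∈ Submodule.span ℝ ((fun lam : Fin n → ℤ => fun i => ((lam i : ℝ))) '' ↑K))
    (hxc : ∀ i : Fin n, (i : ℕ) < r → 0 ≤ x i) : x = 0 := by
  by_contra hx0
  obtain ⟨j0, hj0'⟩ := Function.ne_iff.mp hx0
  have hj0 : x j0 ≠ 0 := hj0'
  rw [Submodule.mem_span_set'] at hx
  obtain ⟨m, tv, vv, hsum⟩ := hx
  have hch : ∀ j : Fin m, ∃ l, l ∈ K ∧ (fun i => ((l i : ℝ))) = (vv j : Fin n → ℝ) := by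
    intro j
    obtain ⟨l, hl, he⟩ := (vv j).2
    exact ⟨l, hl, he⟩
  choose lam hlamK hlamE using hch
  have hxi : ∀ i, x i = ∑ j, tv j * (lam j i : ℝ) := by
    intro i
    rw [← hsum, Finset.sum_apply]
    refine Finset.sum_congr rfl fun j _ => ?_
    rw [Pi.smul_apply, ← hlamE j]
    simp [smul_eq_mul]
  -- rational structure of the coefficients
  set M := Submodule.span ℚ (Set.range tv) with hM
  haveI : FiniteDimensional ℚ M := FiniteDimensional.span_of_finite ℚ (Set.finite_range tv)
  set D := Module.finrank ℚ M with hD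
  set e : Module.Basis (Fin D) ℚ M := Module.finBasis ℚ M with he
  have htmem : ∀ j, tv j ∈ M := fun j => Submodule.subset_span (Set.mem_range_self j)
  set q : Fin m → Fin D → ℚ := fun j k => e.repr ⟨tv j, htmem j⟩ k with hq
  have ht : ∀ j, tv j = ∑ k, (q j k : ℝ) * (e k : ℝ) := by
    intro j
    have h1 := e.sum_repr ⟨tv j, htmem j⟩
    have h2 := congrArg (Subtype.val) h1
    calc tv j = ((∑ k, e.repr ⟨tv j, htmem j⟩ k • e k : M) : ℝ) := h2.symm
      _ = ∑ k, (q j k : ℝ) * (e k : ℝ) := by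
          rw [AddSubmonoidClass.coe_finset_sum]
          refine Finset.sum_congr rfl fun k _ => ?_
          rw [SetLike.val_smul, Rat.smul_def]
  set w : Fin D → Fin n → ℝ := fun k i => ∑ j, (q j k : ℝ) * (lam j i : ℝ) with hw
  set c : Fin D → Fin n → ℚ := fun k i => ∑ j, q j k * (lam j i : ℚ) with hc
  have hwc : ∀ k i, w k i = ((c k i : ℚ) : ℝ) := by
    intro k i
    rw [hw, hc]
    push_cast
    rfl
  have hxw : ∀ i, x i = ∑ k, (e k : ℝ) * w k i := by
    intro i
    rw [hxi i]
    calc ∑ j, tv j * (lam j i : ℝ)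
        = ∑ j, ∑ k, (q j k : ℝ) * (e k : ℝ) * (lam j i : ℝ) := by
          refine Finset.sum_congr rfl fun j _ => ?_
          rw [ht j, Finset.sum_mul]
      _ = ∑ k, ∑ j, (q j k : ℝ) * (e k : ℝ) * (lam j i : ℝ) := Finset.sum_comm
      _ = ∑ k, (e k : ℝ) * w k i := by
          refine Finset.sum_congr rfl fun k _ => ?_
          rw [hw, Finset.mul_sum]
          exact Finset.sum_congr rfl fun j _ => by ring
  have hZ : ∀ i, x i = 0 → ∀ k, w k i = 0 := by
    intro i hi k
    have hrel : ∑ k', c k' i • e k' = (0 : M) := by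
      apply Subtype.ext
      rw [AddSubmonoidClass.coe_finset_sum]
      have : ∑ k', ((c k' i • e k' : M) : ℝ) = ∑ k', (e k' : ℝ) * w k' i := by
        refine Finset.sum_congr rfl fun k' _ => ?_
        rw [SetLike.val_smul, Rat.smul_def, hwc k' i]
        ring
      rw [this, ← hxw i, hi]
      rfl
    have h0 := Fintype.linearIndependent_iff.mp e.linearIndependent (fun k' => c k' i) hrel k
    rw [hwc k i, h0]
    exact Rat.cast_zero
  -- choose the approximation accuracy
  have hne : (Finset.univ.filter (fun i => x i ≠ 0)).Nonempty := ⟨j0, by simp [hj0]⟩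
  set ε := (Finset.univ.filter (fun i => x i ≠ 0)).inf' hne (fun i => |x i|) with hε
  have hεpos : 0 < ε := by
    rw [hε, Finset.lt_inf'_iff]
    intro i hi
    simp only [Finset.mem_filter] at hi
    exact abs_pos.mpr hi.2
  have hεle : ∀ i, x i ≠ 0 → ε ≤ |x i| := fun i hi =>
    Finset.inf'_le _ (by simp [hi])
  set C := ∑ k, ‖w k‖ with hC
  have hC0 : 0 ≤ C := Finset.sum_nonneg fun k _ => norm_nonneg _
  set δ := ε / (C + 1) with hδ
  have hδpos : 0 < δ := by positivity
  have happrox : ∀ k : Fin D, ∃ s : ℚ, |(s : ℝ) - (e k : ℝ)| < δ := by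
    intro k
    obtain ⟨s, h1, h2⟩ := exists_rat_btwn (show ((e k : ℝ)) < (e k : ℝ) + δ by linarith)
    exact ⟨s, abs_lt.mpr ⟨by linarith, by linarith⟩⟩
  choose sq hsq using happrox
  set a : Fin m → ℚ := fun j => ∑ k, sq k * q j k with ha
  set y : Fin n → ℝ := fun i => ∑ k, (sq k : ℝ) * w k i with hy
  have hya : ∀ i, y i = ∑ j, (a j : ℝ) * (lam j i : ℝ) := by
    intro i
    rw [hy]
    calc ∑ k, (sq k : ℝ) * w k i
        = ∑ k, ∑ j, (sq k : ℝ) * ((q j k : ℝ) * (lam j i : ℝ)) := by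
          refine Finset.sum_congr rfl fun k _ => ?_
          rw [hw, Finset.mul_sum]
      _ = ∑ j, ∑ k, (sq k : ℝ) * ((q j k : ℝ) * (lam j i : ℝ)) := Finset.sum_comm
      _ = ∑ j, (a j : ℝ) * (lam j i : ℝ) := by
          refine Finset.sum_congr rfl fun j _ => ?_
          rw [ha]
          push_cast
          rw [Finset.sum_mul]
          exact Finset.sum_congr rfl fun k _ => by ring
  have hyx : ∀ i, |y i - x i| < ε := by
    intro i
    have h1 : y i - x i = ∑ k, ((sq k : ℝ) - (e k : ℝ)) * w k i := by
      rw [hy, hxw i, ← Finset.sum_sub_distrib]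
      exact Finset.sum_congr rfl fun k _ => by ring
    rw [h1]
    calc |∑ k, ((sq k : ℝ) - (e k : ℝ)) * w k i|
        ≤ ∑ k, |((sq k : ℝ) - (e k : ℝ)) * w k i| := Finset.abs_sum_le_sum_abs _ _
      _ ≤ ∑ k, δ * ‖w k‖ := by
          refine Finset.sum_le_sum fun k _ => ?_
          rw [abs_mul]
          refine mul_le_mul (le_of_lt (hsq k)) ?_ (abs_nonneg _) (le_of_lt hδpos)
          calc |w k i| = ‖w k i‖ := (Real.norm_eq_abs _).symm
            _ ≤ ‖w k‖ := norm_le_pi_norm _ i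
      _ = δ * C := by rw [hC, Finset.mul_sum]
      _ < δ * (C + 1) := mul_lt_mul_of_pos_left (lt_add_one C) hδpos
      _ = ε := by rw [hδ]; field_simp
  have hyZ : ∀ i, x i = 0 → y i = 0 := by
    intro i hi
    rw [hy]
    exact Finset.sum_eq_zero fun k _ => by rw [hZ i hi k, mul_zero]
  -- clear denominators
  set N : ℕ := ∏ j, (a j).den with hN
  have hNpos : 0 < N := Finset.prod_pos fun j _ => (a j).pos
  have hbex : ∀ j : Fin m, ∃ b : ℤ, (b : ℚ) = a j * N := by
    intro j
    obtain ⟨cj, hcj⟩ := Finset.dvd_prod_of_mem (fun j => (a j).den) (Finset.mem_univ j)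
    refine ⟨(a j).num * cj, ?_⟩
    have hNn : N = (a j).den * cj := hcj
    rw [hNn]
    push_cast
    rw [← mul_assoc, Rat.mul_den_eq_num]
  choose b hb using hbex
  set μ : Fin n → ℤ := fun i => ∑ j, b j * lam j i with hμ
  have hμK : μ ∈ K := by
    have hrepr : μ = ∑ j, b j • lam j := by
      funext i
      rw [hμ, Finset.sum_apply]
      rfl
    rw [hrepr]
    exact sum_mem fun j _ => K.zsmul_mem (hlamK j) (b j)
  have hμy : ∀ i, (μ i : ℝ) = N * y i := by
    intro i
    rw [hμ]
    push_cast
    rw [hya i, Finset.mul_sum]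
    refine Finset.sum_congr rfl fun j _ => ?_
    have hbj : ((b j : ℝ)) = (a j : ℝ) * N := by exact_mod_cast hb j
    rw [hbj]
    ring
  have hμcone : ∀ i : Fin n, (i : ℕ) < r → 0 ≤ μ i := by
    intro i hi
    rcases eq_or_lt_of_le (hxc i hi) with h0 | hpos
    · have hy0 : y i = 0 := hyZ i h0.symm
      have : (μ i : ℝ) = 0 := by rw [hμy i, hy0, mul_zero]
      exact_mod_cast this.ge
    · have h2 : ε ≤ x i := by
        have := hεle i (ne_of_gt hpos)
        rwa [abs_of_pos hpos] at this
      have h3 : 0 < y i := by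
        have h4 := abs_lt.mp (hyx i)
        linarith [h4.1]
      have : (0:ℝ) ≤ (μ i : ℝ) := by
        rw [hμy i]
        positivity
      exact_mod_cast this
  have hμj0 : μ j0 ≠ 0 := by
    have hyj0 : y j0 ≠ 0 := by
      intro h
      have h1 := hyx j0
      rw [h, zero_sub, abs_neg] at h1
      exact absurd h1 (not_lt.mpr (hεle j0 hj0))
    intro h
    have h2 : (μ j0 : ℝ) = 0 := by rw [h]; exact Int.cast_zero
    rw [hμy j0] at h2
    rcases mul_eq_zero.mp h2 with h' | h'
    · exact (Nat.cast_ne_zero.mpr hNpos.ne' : (N:ℝ) ≠ 0) h'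
    · exact hyj0 h'
  exact hμj0 (by rw [hK μ hμK hμcone]; rfl)

/-- the following are equivalent:
(1) some graded component is finite dimensional: there is `φ ∈ ℕ^r × ℤ^s` with
    `(φ + 𝔎) ∩ (ℕ^r × ℤ^s)` finite;
(2) every graded component is finite dimensional: for every `φ ∈ ℕ^r × ℤ^s` the set
    `(φ + 𝔎) ∩ (ℕ^r × ℤ^s)` is finite;
(3) the real span of `𝔎` meets the cone `ℝ_{≥0}^r × ℝ^s` only in `0`. -/
theorem stmt11 {r s p t : ℕ} (n : ℕ) (hn : n = r + s)
    (L : Matrix (Fin p ⊕ Fin t) (Fin n) ℤ) (d : Fin t → ℤ) (hd : ∀ j, 0 < d j) :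
    ((∃ φ ∈ NNcone r n,
        {lam : Fin n → ℤ | lam ∈ NNcone r n ∧ lam - φ ∈ Kker L d}.Finite) ↔
      (∀ φ ∈ NNcone r n,
        {lam : Fin n → ℤ | lam ∈ NNcone r n ∧ lam - φ ∈ Kker L d}.Finite)) ∧
    ((∀ φ ∈ NNcone r n,
        {lam : Fin n → ℤ | lam ∈ NNcone r n ∧ lam - φ ∈ Kker L d}.Finite) ↔
      ∀ x : Fin n → ℝ,
        x ∈ Submodule.span ℝ ((fun lam : Fin n → ℤ => fun i => (lam i : ℝ)) '' Kker L d) →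
        (∀ i : Fin n, (i : ℕ) < r → 0 ≤ x i) → x = 0) := by
  have hrn : r ≤ n := by omega
  set K := KkerGrp L d with hKdef
  have hzero : (0 : Fin n → ℤ) ∈ NNcone r n := fun i _ => le_refl 0
  have hP0of : ∀ φ ∈ NNcone r n,
      {lam : Fin n → ℤ | lam ∈ NNcone r n ∧ lam - φ ∈ Kker L d}.Finite →
      (∀ ν ∈ K, (∀ i : Fin n, (i : ℕ) < r → 0 ≤ ν i) → ν = 0) := by
    intro φ hφ hfin
    by_contra h
    push_neg at h
    obtain ⟨ν, hν, hνc, hν0⟩ := h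
    exact (infB K hν hνc hν0 φ hφ) hfin
  constructor
  · constructor
    · rintro ⟨φ, hφ, hfin⟩ ψ hψ
      exact finA hrn K (hP0of φ hφ hfin) ψ
    · intro h
      exact ⟨0, hzero, h 0 hzero⟩
  · constructor
    · intro h
      exact hardLem K (hP0of 0 hzero (h 0 hzero))
    · intro h3 φ hφ
      refine finA hrn K ?_ φ
      intro ν hν hνc
      have hx := h3 (fun i => (ν i : ℝ)) (Submodule.subset_span ⟨ν, hν, rfl⟩)
        (fun i hi => by simpa using Int.cast_nonneg_iff (R := ℝ) |>.mpr (hνc i hi))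
      funext i
      have h5 : ((ν i : ℝ)) = 0 := by simpa using congrFun hx i
      exact_mod_cast h5
end

section
/- Suppose the grading is positive, i.e., 𝔎 ∩ (ℕ^r × ℤ^s) = {0}. Let K be an n×l integer matrix whose columns form a ℤ-basis of 𝔎, with rows v_1, …, v_n ∈ ℤ^l. Then for every φ ∈ ℕ^r × ℤ^s, the set {λ ∈ ℕ^r × ℤ^s : λ − φ ∈ 𝔎} is finite and its cardinality equals the (finite) number of lattice points of the polytope P_φ = {u ∈ ℝ^l : ⟨u, v_i⟩ ≥ −φ_i for i = 1, …, r}; equivalently, the dimension of the graded component S_a over k, for a = deg(φ), equals #(P_φ ∩ ℤ^l). -/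
open Matrix

/-- suppose the grading is positive (`𝔎 ∩ (ℕ^r × ℤ^s) = {0}`) and let `K`
be an `n × l` integer matrix whose columns form a `ℤ`-basis of `𝔎`, with rows
`v_1, …, v_n`. Then for every `φ ∈ ℕ^r × ℤ^s` the set `{λ ∈ ℕ^r × ℤ^s | λ - φ ∈ 𝔎}`
(indexing a `k`-basis of `S_a`, `a = deg φ`) is finite, the set of lattice points of the
polytope `P_φ = {u | ⟨u, v_i⟩ ≥ -φ_i, i = 1..r}` is finite, and their cardinalities
coincide: `dim_k S_a = #(P_φ ∩ ℤ^l)`. -/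
theorem stmt12 {r s p t l : ℕ} (n : ℕ) (hn : n = r + s)
    (L : Matrix (Fin p ⊕ Fin t) (Fin n) ℤ) (d : Fin t → ℤ) (hd : ∀ j, 0 < d j)
    (hpos : Kker L d ∩ NNcone r n = {0})
    (K : Matrix (Fin n) (Fin l) ℤ)
    (hKli : LinearIndependent ℤ (fun c : Fin l => fun i : Fin n => K i c))
    (hKspan : ∀ lam : Fin n → ℤ, lam ∈ Kker L d ↔ ∃ u : Fin l → ℤ, lam = K.mulVec u) :
    ∀ φ ∈ NNcone r n,
      {lam : Fin n → ℤ | lam ∈ NNcone r n ∧ lam - φ ∈ Kker L d}.Finite ∧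
      {u : Fin l → ℤ | ∀ i : Fin n, (i : ℕ) < r → -(φ i) ≤ K.mulVec u i}.Finite ∧
      {lam : Fin n → ℤ | lam ∈ NNcone r n ∧ lam - φ ∈ Kker L d}.ncard =
        {u : Fin l → ℤ | ∀ i : Fin n, (i : ℕ) < r → -(φ i) ≤ K.mulVec u i}.ncard := by
  -- kernel of mulVec is trivial
  have hker : ∀ w : Fin l → ℤ, K.mulVec w = 0 → w = 0 := by
    intro w hw
    have h := Fintype.linearIndependent_iff.mp hKli w ?_
    · funext c; exact h c
    · funext i
      have := congrFun hw i
      simpa [Matrix.mulVec, dotProduct, mul_comm] using this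
  have hKonly : ∀ w : Fin l → ℤ, (∀ i : Fin n, (i : ℕ) < r → 0 ≤ K.mulVec w i) → w = 0 := by
    intro w hw
    have hmem : K.mulVec w ∈ Kker L d ∩ NNcone r n :=
      ⟨(hKspan _).mpr ⟨w, rfl⟩, hw⟩
    rw [hpos] at hmem
    exact hker w hmem
  intro φ hφ
  set T : Set (Fin l → ℤ) :=
    {u : Fin l → ℤ | ∀ i : Fin n, (i : ℕ) < r → -(φ i) ≤ K.mulVec u i} with hT
  have hrn : r ≤ n := by omega
  -- T is finite via Dickson's lemma
  have hTfin : T.Finite := by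
    by_contra hinf
    have f := Set.Infinite.natEmbedding T hinf
    set g : (Fin l → ℤ) → (Fin r → ℕ) := fun u i =>
      (K.mulVec u (Fin.castLE hrn i) + φ (Fin.castLE hrn i)).toNat with hg
    have hpwo : (Set.univ : Set (Fin r → ℕ)).IsPWO := Set.isPWO_of_wellQuasiOrderedLE _
    obtain ⟨m, k, hmk, hle⟩ := hpwo.exists_lt (f := fun j => g ((f j).1)) (fun _ => trivial)
    have key : ∀ j : ℕ, ∀ i : Fin n, ∀ hi : (i : ℕ) < r,
        K.mulVec ((f j).1) i + φ i = ((g ((f j).1)) ⟨i, hi⟩ : ℤ) := by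
      intro j i hi
      have h1 : Fin.castLE hrn (⟨(i : ℕ), hi⟩ : Fin r) = i := by
        apply Fin.ext; rfl
      have h2 : (0:ℤ) ≤ K.mulVec ((f j).1) i + φ i := by
        have := (f j).2 i hi
        linarith
      simp [hg, h1, Int.toNat_of_nonneg h2]
    have hw0 : (f k).1 - (f m).1 = 0 := by
      apply hKonly
      intro i hi
      rw [Matrix.mulVec_sub]
      have hm := key m i hi
      have hk := key k i hi
      have hle' : ((g ((f m).1)) ⟨i, by omega⟩ : ℤ) ≤ ((g ((f k).1)) ⟨i, by omega⟩ : ℤ) := by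
        exact_mod_cast hle ⟨i, by omega⟩
      simp only [Pi.sub_apply]
      linarith
    have : f m = f k := by
      apply Subtype.ext
      have : (f k).1 = (f m).1 := by
        have := sub_eq_zero.mp hw0; exact this
      exact this.symm
    exact absurd (f.injective this) (by omega)
  -- the bijection
  have hinj : ∀ u u' : Fin l → ℤ, K.mulVec u = K.mulVec u' → u = u' := by
    intro u u' h
    have : u - u' = 0 := hker _ (by rw [Matrix.mulVec_sub, h, sub_self])
    exact sub_eq_zero.mp this
  have himg : {lam : Fin n → ℤ | lam ∈ NNcone r n ∧ lam - φ ∈ Kker L d} =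
      (fun u => φ + K.mulVec u) '' T := by
    ext lam
    constructor
    · rintro ⟨hc, hk⟩
      obtain ⟨u, hu⟩ := (hKspan _).mp hk
      refine ⟨u, fun i hi => ?_, ?_⟩
      · have h3 : K.mulVec u i = lam i - φ i := by
          have := congrFun hu i; simpa using this.symm
        linarith [hc i hi]
      · show φ + K.mulVec u = lam
        rw [← hu]; abel
    · rintro ⟨u, hu, rfl⟩
      constructor
      · intro i hi
        have := hu i hi
        simp only [Pi.add_apply]
        linarith
      · have : φ + K.mulVec u - φ = K.mulVec u := by abel
        rw [this]
        exact (hKspan _).mpr ⟨u, rfl⟩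
  have hinjOn : Set.InjOn (fun u => φ + K.mulVec u) T := by
    intro u _ u' _ h
    exact hinj u u' (by simpa using h)
  refine ⟨?_, hTfin, ?_⟩
  · rw [himg]; exact hTfin.image _
  · rw [himg, Set.ncard_image_of_injOn hinjOn]
end

section
/- Let K be an n×l integer matrix whose columns form a ℤ-basis of 𝔎, with rows v_1, …, v_n ∈ ℤ^l, and let C^∨ = {u ∈ ℝ^l : ⟨u, v_i⟩ ≥ 0 for all i = 1, …, r} be the dual cone of the cone generated by v_1, …, v_r. Suppose w_1, …, w_h ∈ C^∨ ∩ ℤ^l form a Hilbert basis of C^∨, i.e., every lattice point of C^∨ is a nonnegative-integer combination of w_1, …, w_h. Then the monoid 𝔎 ∩ (ℕ^r × ℤ^s) equals {n_1·(Kw_1) + … + n_h·(Kw_h) : n_1, …, n_h ∈ ℕ}, i.e., it is generated as a monoid by Kw_1, …, Kw_h. (Equivalently, S_0 = k[x^{ω(w_1)}, …, x^{ω(w_h)}].) -/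
open Matrix

lemma mulVec_sum_nsmul {n l h : ℕ} (K : Matrix (Fin n) (Fin l) ℤ) (c : Fin h → ℕ)
    (w : Fin h → Fin l → ℤ) :
    K.mulVec (∑ k : Fin h, c k • w k) = ∑ k : Fin h, c k • K.mulVec (w k) := by
  funext i
  simp only [Matrix.mulVec, dotProduct, Finset.sum_apply, Pi.smul_apply,
    smul_eq_mul, Finset.mul_sum, nsmul_eq_mul, Pi.mul_apply, Pi.natCast_apply]
  rw [Finset.sum_comm]
  exact Finset.sum_congr rfl fun k _ => Finset.sum_congr rfl fun j _ => by ring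

/-- let `K` be an `n × l` matrix whose columns are a `ℤ`-basis of `𝔎`, with
rows `v_1, …, v_n`, and let `C^∨ = {u | ⟨u, v_i⟩ ≥ 0, i = 1..r}`.  If `w_1, …, w_h` is a
Hilbert basis of `C^∨` (every lattice point of `C^∨` is an `ℕ`-combination of the `w_k`),
then the monoid `𝔎 ∩ (ℕ^r × ℤ^s)` is generated by `Kw_1, …, Kw_h`:
`𝔎 ∩ (ℕ^r × ℤ^s) = {∑ n_k·(Kw_k) | n_k ∈ ℕ}` (i.e. `S₀ = k[x^{ω(w_1)},…,x^{ω(w_h)}]`). -/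
theorem stmt13 {r s p t l h : ℕ} (n : ℕ) (hn : n = r + s)
    (L : Matrix (Fin p ⊕ Fin t) (Fin n) ℤ) (d : Fin t → ℤ) (hd : ∀ j, 0 < d j)
    (K : Matrix (Fin n) (Fin l) ℤ)
    (hKli : LinearIndependent ℤ (fun c : Fin l => fun i : Fin n => K i c))
    (hKspan : ∀ lam : Fin n → ℤ, lam ∈ Kker L d ↔ ∃ u : Fin l → ℤ, lam = K.mulVec u)
    (w : Fin h → Fin l → ℤ)
    (hw : ∀ k : Fin h, ∀ i : Fin n, (i : ℕ) < r → 0 ≤ K.mulVec (w k) i)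
    (hHilbert : ∀ u : Fin l → ℤ, (∀ i : Fin n, (i : ℕ) < r → 0 ≤ K.mulVec u i) →
      ∃ c : Fin h → ℕ, u = ∑ k : Fin h, c k • w k) :
    Kker L d ∩ NNcone r n =
      {lam : Fin n → ℤ | ∃ c : Fin h → ℕ, lam = ∑ k : Fin h, c k • K.mulVec (w k)} := by
  ext lam
  constructor
  · rintro ⟨hker, hnn⟩
    obtain ⟨u, rfl⟩ := (hKspan lam).1 hker
    obtain ⟨c, rfl⟩ := hHilbert u hnn
    exact ⟨c, mulVec_sum_nsmul K c w⟩
  · rintro ⟨c, rfl⟩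
    refine ⟨(hKspan _).2 ⟨∑ k, c k • w k, (mulVec_sum_nsmul K c w).symm⟩, ?_⟩
    intro i hi
    simp only [Finset.sum_apply, Pi.smul_apply]
    exact Finset.sum_nonneg fun k _ => smul_nonneg (Nat.cast_nonneg _) (hw k i hi)
end

section
/- Let w_1, …, w_h ∈ ℤ^l, let C = {α_1 w_1 + … + α_h w_h : α_i ∈ ℝ, α_i ≥ 0} be the convex cone they generate, and let B = {α_1 w_1 + … + α_h w_h : 0 ≤ α_i ≤ 1}. Let P ⊆ ℝ^l be a polytope and set Q = P + C (Minkowski sum). Then the lattice points of Q decompose as Q ∩ ℤ^l = ((P + B) ∩ ℤ^l) + (C ∩ ℤ^l), i.e., every lattice point of Q is the sum of a lattice point of the bounded set P + B and a lattice point of C, and conversely every such sum is a lattice point of Q. -/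
open Pointwise

/-- The cone `C = ℝ_{≥0} w_1 + … + ℝ_{≥0} w_h ⊆ ℝ^l` generated by `w_1, …, w_h ∈ ℤ^l`. -/
def coneGen {l h : ℕ} (w : Fin h → Fin l → ℤ) : Set (Fin l → ℝ) :=
  {x | ∃ α : Fin h → ℝ, (∀ k, 0 ≤ α k) ∧ x = ∑ k : Fin h, α k • fun j => (w k j : ℝ)}

/-- The "box" `B = {∑ α_k w_k | 0 ≤ α_k ≤ 1}`. -/
def boxGen {l h : ℕ} (w : Fin h → Fin l → ℤ) : Set (Fin l → ℝ) :=
  {x | ∃ α : Fin h → ℝ, (∀ k, 0 ≤ α k ∧ α k ≤ 1) ∧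
    x = ∑ k : Fin h, α k • fun j => (w k j : ℝ)}

/-- The lattice `ℤ^l ⊆ ℝ^l`. -/
def intLattice (l : ℕ) : Set (Fin l → ℝ) :=
  {x | ∀ i : Fin l, ∃ m : ℤ, x i = (m : ℝ)}

/-- let `w_1, …, w_h ∈ ℤ^l`, let `C` be the convex cone they generate and
`B = {∑ α_k w_k | 0 ≤ α_k ≤ 1}`. Let `P ⊆ ℝ^l` be a polytope (convex hull of a finite
set) and `Q = P + C` the Minkowski sum. Then
`Q ∩ ℤ^l = ((P + B) ∩ ℤ^l) + (C ∩ ℤ^l)`. -/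
theorem stmt14 {l h : ℕ} (hl : 1 ≤ l) (w : Fin h → Fin l → ℤ)
    (P : Set (Fin l → ℝ)) (F : Finset (Fin l → ℝ))
    (hP : P = convexHull ℝ (F : Set (Fin l → ℝ))) :
    (P + coneGen w) ∩ intLattice l =
      ((P + boxGen w) ∩ intLattice l) + (coneGen w ∩ intLattice l) := by
  ext x
  constructor
  · rintro ⟨⟨p, hp, c, ⟨α, hα, rfl⟩, rfl⟩, hx⟩
    set wr : Fin h → Fin l → ℝ := fun k => fun j => (w k j : ℝ) with hwr
    set y : Fin l → ℝ := p + ∑ k, Int.fract (α k) • wr k with hy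
    set z : Fin l → ℝ := ∑ k, (⌊α k⌋ : ℝ) • wr k with hz
    have hsum : y + z = p + ∑ k, α k • wr k := by
      rw [hy, hz, add_assoc, ← Finset.sum_add_distrib]
      congr 1
      apply Finset.sum_congr rfl
      intro k _
      rw [← add_smul, Int.fract_add_floor]
    have hzint : ∀ i, ∃ m : ℤ, z i = (m : ℝ) := by
      intro i
      refine ⟨∑ k, ⌊α k⌋ * w k i, ?_⟩
      rw [hz]
      simp only [Finset.sum_apply, Pi.smul_apply, smul_eq_mul]
      push_cast
      rfl
    refine ⟨y, ⟨⟨p, hp, ∑ k, Int.fract (α k) • wr k,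
      ⟨fun k => Int.fract (α k), fun k => ⟨Int.fract_nonneg _, (Int.fract_lt_one _).le⟩, rfl⟩,
      rfl⟩, ?_⟩, z, ⟨⟨fun k => (⌊α k⌋ : ℝ), fun k => by simpa using Int.floor_nonneg.mpr (hα k), rfl⟩, hzint⟩, hsum⟩
    · intro i
      obtain ⟨mx, hmx⟩ := hx i
      obtain ⟨mz, hmz⟩ := hzint i
      refine ⟨mx - mz, ?_⟩
      have : y i + z i = (p + ∑ k, α k • wr k) i := by rw [← hsum]; rfl
      have hyi : y i = (p + ∑ k, α k • wr k) i - z i := by linarith [this]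
      have hmx' : (p + ∑ k, α k • wr k) i = (mx : ℝ) := hmx
      rw [hyi, hmx', hmz]
      push_cast
      ring
  · rintro ⟨y, ⟨⟨p, hp, b, ⟨β, hβ, rfl⟩, rfl⟩, hyL⟩, z, ⟨⟨γ, hγ, rfl⟩, hzL⟩, rfl⟩
    constructor
    · refine ⟨p, hp, _, ⟨fun k => β k + γ k,
        fun k => add_nonneg (hβ k).1 (hγ k), rfl⟩, ?_⟩
      dsimp only
      rw [add_assoc, ← Finset.sum_add_distrib]
      congr 1
      apply Finset.sum_congr rfl
      intro k _
      rw [add_smul]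
    · intro i
      obtain ⟨my, hmy⟩ := hyL i
      obtain ⟨mz, hmz⟩ := hzL i
      exact ⟨my + mz, by simp [hmy, hmz]⟩
end

section
/- For every φ ∈ ℕ^r × ℤ^s, the set Σ_φ = {λ ∈ ℕ^r × ℤ^s : λ − φ ∈ 𝔎} is finitely generated as a module over the monoid Σ_0 = 𝔎 ∩ (ℕ^r × ℤ^s): there exists a finite subset F ⊆ Σ_φ such that Σ_φ = {f + σ : f ∈ F, σ ∈ Σ_0}. (Equivalently, every graded component S_a of S, a in the degree semigroup, is finitely generated as an S_0-module.) -/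
open Matrix

lemma Kker_add {p t n : ℕ} {L : Matrix (Fin p ⊕ Fin t) (Fin n) ℤ} {d : Fin t → ℤ}
    {a b : Fin n → ℤ} (ha : a ∈ Kker L d) (hb : b ∈ Kker L d) : a + b ∈ Kker L d := by
  obtain ⟨ha1, ha2⟩ := ha
  obtain ⟨hb1, hb2⟩ := hb
  constructor
  · intro j; rw [Matrix.mulVec_add]; simp [ha1 j, hb1 j]
  · intro j; rw [Matrix.mulVec_add]; exact dvd_add (ha2 j) (hb2 j)

lemma Kker_sub {p t n : ℕ} {L : Matrix (Fin p ⊕ Fin t) (Fin n) ℤ} {d : Fin t → ℤ}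
    {a b : Fin n → ℤ} (ha : a ∈ Kker L d) (hb : b ∈ Kker L d) : a - b ∈ Kker L d := by
  obtain ⟨ha1, ha2⟩ := ha
  obtain ⟨hb1, hb2⟩ := hb
  constructor
  · intro j; rw [Matrix.mulVec_sub]; simp [ha1 j, hb1 j]
  · intro j; rw [Matrix.mulVec_sub]; exact dvd_sub (ha2 j) (hb2 j)

/-- for every `φ ∈ ℕ^r × ℤ^s`, the set
`Σ_φ = {λ ∈ ℕ^r × ℤ^s | λ - φ ∈ 𝔎}` is finitely generated as a module over the monoid
`Σ_0 = 𝔎 ∩ (ℕ^r × ℤ^s)`: there is a finite `F ⊆ Σ_φ` with `Σ_φ = F + Σ_0`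
(equivalently, every graded component `S_a` is a finitely generated `S_0`-module). -/
theorem stmt15 {r s p t : ℕ} (n : ℕ) (hn : n = r + s)
    (L : Matrix (Fin p ⊕ Fin t) (Fin n) ℤ) (d : Fin t → ℤ) (hd : ∀ j, 0 < d j) :
    ∀ φ ∈ NNcone r n, ∃ F : Finset (Fin n → ℤ),
      (↑F ⊆ {lam : Fin n → ℤ | lam ∈ NNcone r n ∧ lam - φ ∈ Kker L d}) ∧
      {lam : Fin n → ℤ | lam ∈ NNcone r n ∧ lam - φ ∈ Kker L d} =
        {lam : Fin n → ℤ | ∃ f ∈ F, ∃ σ ∈ Kker L d ∩ NNcone r n, lam = f + σ} := by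
  classical
  intro φ hφ
  set Sphi : Set (Fin n → ℤ) :=
    {lam : Fin n → ℤ | lam ∈ NNcone r n ∧ lam - φ ∈ Kker L d} with hSphi
  -- truncation to ℕ^n
  set τ : (Fin n → ℤ) → (Fin n → ℕ) :=
    fun lam i => if (i : ℕ) < r then (lam i).toNat else 0 with hτ
  have hτcoe : ∀ lam ∈ Sphi, ∀ i : Fin n, (i : ℕ) < r → ((τ lam i : ℤ)) = lam i := by
    intro lam hlam i hi
    simp only [hτ, hi, if_true]
    exact Int.toNat_of_nonneg (hlam.1 i hi)
  -- key: difference lies in Σ₀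
  have key : ∀ f ∈ Sphi, ∀ lam ∈ Sphi, τ f ≤ τ lam →
      lam - f ∈ Kker L d ∩ NNcone r n := by
    intro f hf lam hlam hle
    constructor
    · have : lam - f = (lam - φ) - (f - φ) := by ring
      rw [this]
      exact Kker_sub hlam.2 hf.2
    · intro i hi
      have h1 := hτcoe f hf i hi
      have h2 := hτcoe lam hlam i hi
      have : (τ f i : ℤ) ≤ (τ lam i : ℤ) := Int.ofNat_le.2 (hle i)
      simp only [Pi.sub_apply]
      omega
  by_cases hne : Sphi.Nonempty
  · -- Dickson's lemma
    set M : Set (Fin n → ℕ) := τ '' Sphi with hM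
    have hPWO : M.IsPWO := Set.isPWO_of_wellQuasiOrderedLE M
    set Mmin : Set (Fin n → ℕ) := {v ∈ M | ∀ w ∈ M, w ≤ v → v ≤ w} with hMmin
    have hanti : IsAntichain (· ≤ ·) Mmin := by
      intro v hv w hw hne hle
      exact hne (le_antisymm hle (hw.2 v hv.1 hle))
    have hMminPWO : Mmin.PartiallyWellOrderedOn (· ≤ ·) :=
      hPWO.mono (Set.sep_subset _ _)
    have hfin : Mmin.Finite := hanti.finite_of_partiallyWellOrderedOn hMminPWO
    -- every element of M dominates a minimal element
    have hdom : ∀ v ∈ M, ∃ w ∈ Mmin, w ≤ v := by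
      intro v hv
      set Sv : Set (Fin n → ℕ) := {w ∈ M | w ≤ v} with hSv
      have hSvWF : Sv.IsWF := (hPWO.isWF).mono (Set.sep_subset _ _)
      have hSvne : Sv.Nonempty := ⟨v, hv, le_rfl⟩
      refine ⟨hSvWF.min hSvne, ⟨(hSvWF.min_mem hSvne).1, ?_⟩, (hSvWF.min_mem hSvne).2⟩
      intro w hw hle
      by_contra hnle
      have hlt : w < hSvWF.min hSvne := lt_of_le_of_ne hle (by rintro rfl; exact hnle le_rfl)
      exact hSvWF.not_lt_min hSvne ⟨hw, hle.trans (hSvWF.min_mem hSvne).2⟩ hlt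
    -- choose representatives
    have hrep : ∀ v : Fin n → ℕ, ∃ lam : Fin n → ℤ, v ∈ Mmin → lam ∈ Sphi ∧ τ lam = v := by
      intro v
      by_cases hv : v ∈ Mmin
      · obtain ⟨lam, hlam, hτlam⟩ := hv.1
        exact ⟨lam, fun _ => ⟨hlam, hτlam⟩⟩
      · exact ⟨0, fun h => absurd h hv⟩
    choose g hg using hrep
    refine ⟨(hfin.toFinset).image g, ?_, ?_⟩
    · intro f hf
      simp only [Finset.coe_image, Set.mem_image, Set.Finite.coe_toFinset] at hf
      obtain ⟨v, hv, rfl⟩ := hf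
      exact (hg v hv).1
    · ext lam
      simp only [Set.mem_setOf_eq, Finset.mem_image, Set.Finite.mem_toFinset]
      constructor
      · intro hlam
        have hvM : τ lam ∈ M := ⟨lam, hlam, rfl⟩
        obtain ⟨w, hw, hle⟩ := hdom (τ lam) hvM
        obtain ⟨hgS, hgτ⟩ := hg w hw
        refine ⟨g w, ⟨w, hw, rfl⟩, lam - g w, key (g w) hgS lam hlam (by rw [hgτ]; exact hle), by ring⟩
      · rintro ⟨f, ⟨v, hv, rfl⟩, σ, ⟨hσK, hσN⟩, rfl⟩
        obtain ⟨hgS, _⟩ := hg v hv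
        constructor
        · intro i hi
          have := hgS.1 i hi
          have := hσN i hi
          simp only [Pi.add_apply]; omega
        · have : g v + σ - φ = (g v - φ) + σ := by ring
          rw [this]
          exact Kker_add hgS.2 hσK
  · refine ⟨∅, by simp, ?_⟩
    rw [Set.not_nonempty_iff_eq_empty] at hne
    rw [hne]
    ext lam
    simp
end
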